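/- arXiv:2008.04153 — 6 statements merged into one kernel-verified Lean document; each statement's English description precedes it below -/
import Mathlib

section
/- Let p be a prime and let k, h_1,...,h_l be positive integers with k ≥ ∑_{t=1}^l (p^{h_t} − 1). Let c_{st} ∈ ℤ for all s ∈ {1,...,k}, t ∈ {1,...,l}, and let c_t ∈ ℤ for t ∈ {1,...,l}. Then ∑ (−1)^{|I|}, the sum taken over all subsets I ⊆ {1,...,k} such that p^{h_t} divides ∑_{s∈I} c_{st} − c_t for every t ∈ {1,...,l}, is congruent modulo p to ∑ ∏_{t=1}^l ∏_{s∈I_t} c_{st}, where the latter sum is over all tuples (I_1,...,I_l) of subsets of {1,...,k} with I_1 ∪ ⋯ ∪ I_l = {1,...,k} and |I_t| = p^{h_t} − 1 for each t (such tuples exist only if k = ∑_{t=1}^l (p^{h_t}−1), in which case the I_t are pairwise disjoint; if k > ∑_{t=1}^l (p^{h_t}−1) the right-hand side is an empty sum, equal to 0). -/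
open MvPolynomial Finset

set_option linter.unusedSectionVars false

namespace Sun32

variable {σ : Type*} [Fintype σ] [DecidableEq σ] {K : Type*} [CommRing K]

/-- The ideal of polynomials all of whose monomials either have some exponent `≥ q t`
or total degree `≥ n`. -/
def E (q : σ → ℕ) (n : ℕ) : Ideal (MvPolynomial σ K) where
  carrier := { f | ∀ m ∈ f.support, (∃ t, q t ≤ m t) ∨ n ≤ ∑ t, m t }
  zero_mem' := by simp
  add_mem' := by
    intro a b ha hb m hm
    rcases Finset.mem_union.mp (MvPolynomial.support_add hm) with h | h
    exacts [ha m h, hb m h]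
  smul_mem' := by
    intro cc f hf m hm
    rw [smul_eq_mul] at hm
    obtain ⟨m₁, h₁, m₂, h₂, rfl⟩ := Finset.mem_add.mp (MvPolynomial.support_mul _ _ hm)
    rcases hf m₂ h₂ with ⟨t, ht⟩ | hh
    · exact Or.inl ⟨t, le_trans ht (by simp)⟩
    · refine Or.inr (le_trans hh ?_)
      refine le_trans (Finset.sum_le_sum fun t _ => Nat.le_add_left (m₂ t) (m₁ t)) ?_
      exact le_of_eq (by simp [Finsupp.add_apply])

variable {q : σ → ℕ} {n n' : ℕ}

lemma mem_E {f : MvPolynomial σ K} :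
    f ∈ E q n ↔ ∀ m ∈ f.support, (∃ t, q t ≤ m t) ∨ n ≤ ∑ t, m t := Iff.rfl

lemma E_mono (h : n ≤ n') : (E q n' : Ideal (MvPolynomial σ K)) ≤ E q n := by
  intro f hf m hm
  rcases hf m hm with h1 | h2
  exacts [Or.inl h1, Or.inr (le_trans h h2)]

lemma mul_mem_E {f g : MvPolynomial σ K} (hf : f ∈ E q n) (hg : g ∈ E q n') :
    f * g ∈ E q (n + n') := by
  intro m hm
  obtain ⟨m₁, h₁, m₂, h₂, rfl⟩ := Finset.mem_add.mp (MvPolynomial.support_mul _ _ hm)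
  rcases hf m₁ h₁ with ⟨t, ht⟩ | hd1
  · exact Or.inl ⟨t, le_trans ht (by simp)⟩
  rcases hg m₂ h₂ with ⟨t, ht⟩ | hd2
  · exact Or.inl ⟨t, le_trans ht (by simp)⟩
  · refine Or.inr ?_
    have : ∑ t, (m₁ + m₂) t = (∑ t, m₁ t) + ∑ t, m₂ t := by
      simp [Finsupp.add_apply, Finset.sum_add_distrib]
    rw [this]
    exact Nat.add_le_add hd1 hd2

lemma X_mem_E (t : σ) : (X t : MvPolynomial σ K) ∈ E q 1 := by
  intro m hm
  rw [MvPolynomial.X, MvPolynomial.mem_support_iff, MvPolynomial.coeff_monomial] at hm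
  have : Finsupp.single t 1 = m := by by_contra hc; simp [hc] at hm
  subst this
  refine Or.inr ?_
  have : ∑ t', (Finsupp.single t 1 : σ →₀ ℕ) t' = 1 := by
    simp [Finsupp.single_apply]
  omega

lemma smul_X_mem_E (a : K) (t : σ) : C a * (X t : MvPolynomial σ K) ∈ E q 1 :=
  Ideal.mul_mem_left _ _ (X_mem_E t)

lemma Xpow_mul_mem_E (t : σ) (r : MvPolynomial σ K) : (X t : MvPolynomial σ K) ^ q t * r ∈ E q n := by
  intro m hm
  obtain ⟨m₁, h₁, m₂, h₂, rfl⟩ := Finset.mem_add.mp (MvPolynomial.support_mul _ _ hm)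
  rw [MvPolynomial.X_pow_eq_monomial] at h₁
  have := MvPolynomial.support_monomial_subset h₁
  rw [Finset.mem_singleton] at this
  subst this
  refine Or.inl ⟨t, ?_⟩
  simp [Finsupp.add_apply, Finsupp.single_apply]

/-- the top monomial -/
noncomputable def topm (q : σ → ℕ) : σ →₀ ℕ := Finsupp.equivFunOnFinite.symm fun t => q t - 1

@[simp] lemma topm_apply (t : σ) : topm q t = q t - 1 := rfl

lemma coeff_topm_eq_zero {f : MvPolynomial σ K} (hq : ∀ t, 0 < q t)
    (hn : ∑ t, (q t - 1) < n) (hf : f ∈ E q n) : coeff (topm q) f = 0 := by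
  by_contra hne
  have hmem : topm q ∈ f.support := by
    rw [MvPolynomial.mem_support_iff]; exact hne
  rcases hf _ hmem with ⟨t, ht⟩ | hd
  · have := hq t; simp only [topm_apply] at ht; omega
  · have : ∑ t, topm q t = ∑ t, (q t - 1) := by simp
    omega

lemma coeff_topm_congr {f g : MvPolynomial σ K} (hq : ∀ t, 0 < q t)
    (hn : ∑ t, (q t - 1) < n) (hfg : f - g ∈ E q n) :
    coeff (topm q) f = coeff (topm q) g := by
  have := coeff_topm_eq_zero hq hn hfg
  rw [MvPolynomial.coeff_sub] at this
  exact sub_eq_zero.mp this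

lemma prod_sub_prod_mem (J : Ideal (MvPolynomial σ K)) {ι : Type*} (S : Finset ι)
    (a b : ι → MvPolynomial σ K) (h : ∀ s ∈ S, a s - b s ∈ J) :
    (∏ s ∈ S, a s) - ∏ s ∈ S, b s ∈ J := by
  classical
  induction S using Finset.induction_on with
  | empty => simp
  | @insert i S' hiS ih =>
    rw [Finset.prod_insert hiS, Finset.prod_insert hiS]
    have key : a i * ∏ s ∈ S', a s - b i * ∏ s ∈ S', b s
        = a i * ((∏ s ∈ S', a s) - ∏ s ∈ S', b s) + (a i - b i) * ∏ s ∈ S', b s := by ring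
    rw [key]
    exact Ideal.add_mem _ (Ideal.mul_mem_left _ _ (ih fun s hs => h s (Finset.mem_insert_of_mem hs)))
      (Ideal.mul_mem_right _ _ (h i (Finset.mem_insert_self _ _)))

lemma prod_mem_E {ι : Type*} (S : Finset ι) (a : ι → MvPolynomial σ K)
    (h : ∀ s ∈ S, a s ∈ E q 1) : (∏ s ∈ S, a s) ∈ E q S.card := by
  classical
  induction S using Finset.induction_on with
  | empty => simp [mem_E]
  | @insert i S' hiS ih =>
    rw [Finset.prod_insert hiS, Finset.card_insert_of_notMem hiS, add_comm S'.card 1]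
    exact mul_mem_E (h i (Finset.mem_insert_self _ _))
      (ih fun s hs => h s (Finset.mem_insert_of_mem hs))

lemma prod_sub_prod_mem_E {ι : Type*} (S : Finset ι) (a b : ι → MvPolynomial σ K)
    (ha : ∀ s ∈ S, a s ∈ E q 1) (hb : ∀ s ∈ S, b s ∈ E q 1)
    (hab : ∀ s ∈ S, a s - b s ∈ E q 2) :
    (∏ s ∈ S, a s) - ∏ s ∈ S, b s ∈ E q (S.card + 1) := by
  classical
  induction S using Finset.induction_on with
  | empty => simp [mem_E]
  | @insert i S' hiS ih =>
    rw [Finset.prod_insert hiS, Finset.prod_insert hiS, Finset.card_insert_of_notMem hiS]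
    have key : a i * ∏ s ∈ S', a s - b i * ∏ s ∈ S', b s
        = a i * ((∏ s ∈ S', a s) - ∏ s ∈ S', b s) + (a i - b i) * ∏ s ∈ S', b s := by ring
    rw [key]
    have h1 : a i * ((∏ s ∈ S', a s) - ∏ s ∈ S', b s) ∈ E q (S'.card + 1 + 1) := by
      have := mul_mem_E (ha i (Finset.mem_insert_self _ _))
        (ih (fun s hs => ha s (Finset.mem_insert_of_mem hs))
            (fun s hs => hb s (Finset.mem_insert_of_mem hs))
            (fun s hs => hab s (Finset.mem_insert_of_mem hs)))
      rwa [show 1 + (S'.card + 1) = S'.card + 1 + 1 by omega] at this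
    have h3 : (a i - b i) * ∏ s ∈ S', b s ∈ E q (S'.card + 1 + 1) := by
      have := mul_mem_E (hab i (Finset.mem_insert_self _ _))
        (prod_mem_E S' b (fun s hs => hb s (Finset.mem_insert_of_mem hs)))
      rwa [show 2 + S'.card = S'.card + 1 + 1 by omega] at this
    exact Ideal.add_mem _ h1 h3


/-! ### The products `W` -/

noncomputable def W (K : Type*) [CommRing K] (m : σ → ℕ) : MvPolynomial σ K :=
  ∏ t, (1 + X t) ^ m t

lemma prod_W {ι : Type*} (S : Finset ι) (m : ι → σ → ℕ) :
    ∏ s ∈ S, W (σ := σ) K (m s) = W K fun t => ∑ s ∈ S, m s t := by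
  unfold W
  rw [Finset.prod_comm]
  exact Finset.prod_congr rfl fun t _ => Finset.prod_pow_eq_pow_sum S (fun s => m s t) _

lemma W_mul (m n' : σ → ℕ) : W (σ := σ) K m * W K n' = W K fun t => m t + n' t := by
  unfold W
  rw [← Finset.prod_mul_distrib]
  exact Finset.prod_congr rfl fun t _ => (pow_add _ _ _).symm

lemma pow_expand (t : σ) (m : ℕ) :
    (1 + X t : MvPolynomial σ K) ^ m - 1 - C (m : K) * X t ∈ E q 2 := by
  induction m with
  | zero => simp [mem_E]
  | succ m ih =>
    have key : (1 + X t : MvPolynomial σ K) ^ (m + 1) - 1 - C ((m + 1 : ℕ) : K) * X t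
        = (1 + X t) * ((1 + X t) ^ m - 1 - C (m : K) * X t)
          + C (m : K) * (X t * X t) := by
      have hc : (C ((m + 1 : ℕ) : K) : MvPolynomial σ K) = C (m : K) + 1 := by
        push_cast [map_add, map_one]; ring
      rw [hc]; ring
    rw [key]
    exact Ideal.add_mem _ (Ideal.mul_mem_left _ _ ih)
      (Ideal.mul_mem_left _ _ (mul_mem_E (X_mem_E t) (X_mem_E t)))

lemma prod_sub_one_mem {ι : Type*} (S : Finset ι) (f : ι → MvPolynomial σ K)
    (hf : ∀ t ∈ S, f t - 1 ∈ E q 1) : (∏ t ∈ S, f t) - 1 ∈ E q 1 := by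
  classical
  induction S using Finset.induction_on with
  | empty => simp [mem_E]
  | @insert i S' hiS ih =>
    rw [Finset.prod_insert hiS]
    have key : f i * ∏ t ∈ S', f t - 1
        = f i * ((∏ t ∈ S', f t) - 1) + (f i - 1) := by ring
    rw [key]
    exact Ideal.add_mem _
      (Ideal.mul_mem_left _ _ (ih fun t ht => hf t (Finset.mem_insert_of_mem ht)))
      (hf i (Finset.mem_insert_self _ _))

lemma prod_expand {ι : Type*} (S : Finset ι) (f g : ι → MvPolynomial σ K)
    (hf1 : ∀ t ∈ S, f t - 1 ∈ E q 1) (hg : ∀ t ∈ S, g t ∈ E q 1)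
    (hfg : ∀ t ∈ S, f t - 1 - g t ∈ E q 2) :
    (∏ t ∈ S, f t) - 1 - ∑ t ∈ S, g t ∈ E q 2 := by
  classical
  induction S using Finset.induction_on with
  | empty => simp [mem_E]
  | @insert i S' hiS ih =>
    rw [Finset.prod_insert hiS, Finset.sum_insert hiS]
    have key : f i * ∏ t ∈ S', f t - 1 - (g i + ∑ t ∈ S', g t)
        = (f i - 1 - g i) * ∏ t ∈ S', f t
          + ((∏ t ∈ S', f t) - 1 - ∑ t ∈ S', g t)
          + g i * ((∏ t ∈ S', f t) - 1) := by ring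
    rw [key]
    refine Ideal.add_mem _ (Ideal.add_mem _ ?_ ?_) ?_
    · exact Ideal.mul_mem_right _ _ (hfg i (Finset.mem_insert_self _ _))
    · exact ih (fun t ht => hf1 t (Finset.mem_insert_of_mem ht))
        (fun t ht => hg t (Finset.mem_insert_of_mem ht))
        (fun t ht => hfg t (Finset.mem_insert_of_mem ht))
    · exact mul_mem_E (hg i (Finset.mem_insert_self _ _))
        (prod_sub_one_mem S' f fun t ht => hf1 t (Finset.mem_insert_of_mem ht))

lemma pow_sub_one_mem (t : σ) (m : ℕ) :
    (1 + X t : MvPolynomial σ K) ^ m - 1 ∈ E q 1 := by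
  have h1 := pow_expand (q := q) (K := K) t m
  have h2 : (1 + X t : MvPolynomial σ K) ^ m - 1
      = ((1 + X t) ^ m - 1 - C (m : K) * X t) + C (m : K) * X t := by ring
  rw [h2]
  exact Ideal.add_mem _ (E_mono (by omega) h1) (smul_X_mem_E _ t)

lemma W_sub_one_mem (m : σ → ℕ) : W (σ := σ) K m - 1 ∈ E q 1 :=
  prod_sub_one_mem _ _ fun t _ => pow_sub_one_mem t (m t)

lemma W_expand (m : σ → ℕ) :
    W (σ := σ) K m - 1 - ∑ t, C ((m t : K)) * X t ∈ E q 2 :=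
  prod_expand _ _ _ (fun t _ => pow_sub_one_mem t (m t))
    (fun t _ => smul_X_mem_E _ t) (fun t _ => pow_expand t (m t))

lemma prod_X_pow_eq (e : σ → ℕ) :
    (∏ t, (X t : MvPolynomial σ K) ^ e t) = monomial (Finsupp.equivFunOnFinite.symm e) 1 := by
  rw [← MvPolynomial.prod_X_pow_eq_monomial]
  refine (Finset.prod_subset (Finset.subset_univ _) ?_).symm
  intro t _ ht
  rw [Finsupp.notMem_support_iff] at ht
  rw [show e t = 0 from ht, pow_zero]

lemma coeff_topm_W (m : σ → ℕ) :
    coeff (topm q) (W (σ := σ) K m) = ∏ t, (((m t).choose (q t - 1) : K)) := by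
  classical
  have expand : W (σ := σ) K m
      = ∏ t, ∑ j ∈ Finset.range (m t + 1), X t ^ j * C (((m t).choose j : K)) := by
    refine Finset.prod_congr rfl fun t _ => ?_
    rw [add_comm (1 : MvPolynomial σ K) (X t), add_pow]
    refine Finset.sum_congr rfl fun j _ => ?_
    rw [one_pow, mul_one, ← map_natCast (C : K →+* MvPolynomial σ K)]
  rw [expand, Finset.prod_univ_sum]
  have term : ∀ g : σ → ℕ,
      (∏ t, (X t : MvPolynomial σ K) ^ g t * C (((m t).choose (g t) : K)))
      = monomial (Finsupp.equivFunOnFinite.symm g) (∏ t, (((m t).choose (g t) : K))) := by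
    intro g
    rw [Finset.prod_mul_distrib, prod_X_pow_eq, ← map_prod (C : K →+* MvPolynomial σ K),
      mul_comm, MvPolynomial.C_mul_monomial, mul_one]
  simp_rw [term]
  rw [MvPolynomial.coeff_sum]
  simp_rw [MvPolynomial.coeff_monomial]
  have cond : ∀ g : σ → ℕ,
      (Finsupp.equivFunOnFinite.symm g = topm q) ↔ g = fun t => q t - 1 := by
    intro g
    unfold topm
    exact Equiv.apply_eq_iff_eq _
  simp_rw [cond]
  rw [Finset.sum_ite_eq' (Fintype.piFinset fun t => Finset.range (m t + 1))
    (fun t => q t - 1) (fun g => ∏ t, (((m t).choose (g t) : K)))]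
  by_cases hmem : (fun t => q t - 1) ∈ Fintype.piFinset fun t => Finset.range (m t + 1)
  · rw [if_pos hmem]
  · rw [if_neg hmem]
    rw [Fintype.mem_piFinset] at hmem
    push_neg at hmem
    obtain ⟨t, ht⟩ := hmem
    rw [Finset.mem_range, not_lt] at ht
    refine (Finset.prod_eq_zero (Finset.mem_univ t) ?_).symm
    rw [Nat.choose_eq_zero_of_lt (by omega)]
    simp

lemma coeff_topm_W_ind (hq : ∀ t, 0 < q t) (m : σ → ℕ) (hlt : ∀ t, m t < q t) :
    coeff (topm q) (W (σ := σ) K m) = if (∀ t, m t = q t - 1) then 1 else 0 := by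
  rw [coeff_topm_W]
  have factor : ∀ t, (((m t).choose (q t - 1) : K)) = if m t = q t - 1 then 1 else 0 := by
    intro t
    by_cases he : m t = q t - 1
    · rw [if_pos he, he, Nat.choose_self]; simp
    · rw [if_neg he, Nat.choose_eq_zero_of_lt (by have := hq t; have := hlt t; omega)]
      simp
  simp_rw [factor]
  rw [Finset.prod_boole]
  by_cases hc : ∀ t, m t = q t - 1
  · rw [if_pos fun t _ => hc t, if_pos hc]
  · rw [if_neg, if_neg hc]
    intro hcon
    exact hc fun t => hcon t (Finset.mem_univ t)

/-! ### characteristic p reduction -/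

lemma one_add_X_pow_congr_aux {p : ℕ} [Fact p.Prime] {e : ℕ} (t : σ)
    (hqt : q t = p ^ e) {m n' : ℕ} (hle : m ≤ n') (hmn : m ≡ n' [MOD q t]) :
    (1 + X t : MvPolynomial σ (ZMod p)) ^ n' - (1 + X t) ^ m ∈ E q n := by
  obtain ⟨d, hd⟩ := (Nat.modEq_iff_dvd' hle).mp hmn
  have hn' : n' = m + q t * d := by omega
  have charpow : (1 + X t : MvPolynomial σ (ZMod p)) ^ q t = 1 + X t ^ q t := by
    rw [hqt, add_pow_char_pow, one_pow]
  obtain ⟨r, hr⟩ := sub_dvd_pow_sub_pow (1 + (X t : MvPolynomial σ (ZMod p)) ^ q t) 1 d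
  have hr' : (1 + (X t : MvPolynomial σ (ZMod p)) ^ q t) ^ d - 1 = X t ^ q t * r := by
    rw [one_pow] at hr
    rw [hr]; ring
  have key : (1 + X t : MvPolynomial σ (ZMod p)) ^ n' - (1 + X t) ^ m
      = (1 + X t) ^ m * (((1 + X t ^ q t) ^ d) - 1) := by
    rw [hn', pow_add, pow_mul, charpow]; ring
  rw [key, hr']
  have : (1 + X t : MvPolynomial σ (ZMod p)) ^ m * (X t ^ q t * r)
      = X t ^ q t * ((1 + X t) ^ m * r) := by ring
  rw [this]
  exact Xpow_mul_mem_E t _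

lemma one_add_X_pow_congr {p : ℕ} [Fact p.Prime] {e : ℕ} (t : σ)
    (hqt : q t = p ^ e) {m n' : ℕ} (hmn : m ≡ n' [MOD q t]) :
    (1 + X t : MvPolynomial σ (ZMod p)) ^ m - (1 + X t) ^ n' ∈ E q n := by
  rcases le_total m n' with hle | hle
  · have := one_add_X_pow_congr_aux (n := n) t hqt hle hmn
    have h2 : (1 + X t : MvPolynomial σ (ZMod p)) ^ m - (1 + X t) ^ n'
        = -((1 + X t) ^ n' - (1 + X t) ^ m) := by ring
    rw [h2]; exact Submodule.neg_mem _ this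
  · exact one_add_X_pow_congr_aux (n := n) t hqt hle hmn.symm

lemma W_congr {p : ℕ} [Fact p.Prime] (hq : ∀ t, ∃ e, q t = p ^ e)
    (m n' : σ → ℕ) (hmn : ∀ t, m t ≡ n' t [MOD q t]) :
    W (σ := σ) (ZMod p) m - W (ZMod p) n' ∈ E q n := by
  refine prod_sub_prod_mem _ _ _ _ fun t _ => ?_
  obtain ⟨e, he⟩ := hq t
  exact one_add_X_pow_congr t he (hmn t)



/-! ### integer residues -/

def nuu (q : ℕ) (z : ℤ) : ℕ := (z % (q : ℤ)).toNat

lemma nuu_cast {q : ℕ} (hq : 0 < q) (z : ℤ) : (nuu q z : ℤ) = z % (q : ℤ) := by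
  unfold nuu
  exact Int.toNat_of_nonneg (Int.emod_nonneg z (by exact_mod_cast hq.ne'))

lemma nuu_lt {q : ℕ} (hq : 0 < q) (z : ℤ) : nuu q z < q := by
  have h1 : z % (q : ℤ) < q := Int.emod_lt_of_pos z (by exact_mod_cast hq)
  have := nuu_cast hq z
  omega

lemma nuu_eq_iff {q : ℕ} (hq : 0 < q) (z : ℤ) :
    nuu q z = q - 1 ↔ (q : ℤ) ∣ z + 1 := by
  have hcast := nuu_cast hq z
  have h0 : 0 ≤ z % (q : ℤ) := Int.emod_nonneg z (by exact_mod_cast hq.ne')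
  have hlt : z % (q : ℤ) < q := Int.emod_lt_of_pos z (by exact_mod_cast hq)
  constructor
  · intro hyp
    have hz : z % (q : ℤ) = (q : ℤ) - 1 := by omega
    have hdiv := Int.emod_add_mul_ediv z (q : ℤ)
    refine ⟨z / (q : ℤ) + 1, ?_⟩
    rw [mul_add, mul_one]
    omega
  · rintro ⟨e, he⟩
    have hz : z = -1 + (q : ℤ) * e := by omega
    have : z % (q : ℤ) = (-1 : ℤ) % (q : ℤ) := by
      rw [hz, Int.add_mul_emod_self_left]
    have hneg : (-1 : ℤ) % (q : ℤ) = (q : ℤ) - 1 := by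
      have h2 : ((-1 : ℤ) + (q : ℤ) * 1) % (q : ℤ) = (-1 : ℤ) % (q : ℤ) :=
        Int.add_mul_emod_self_left (a := -1) (b := (q : ℤ)) (c := 1)
      have h3 : ((q : ℤ) - 1) % (q : ℤ) = (q : ℤ) - 1 :=
        Int.emod_eq_of_lt (by omega) (by omega)
      have h4 : (-1 : ℤ) + (q : ℤ) * 1 = (q : ℤ) - 1 := by ring
      rw [h4] at h2
      omega
    omega

lemma nuu_castZMod {q : ℕ} (hq : 0 < q) (z : ℤ) :
    ((nuu q z : ℕ) : ZMod q) = (z : ZMod q) := by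
  have h1 : ((nuu q z : ℕ) : ZMod q) = (((nuu q z : ℕ) : ℤ) : ZMod q) := by push_cast; rfl
  rw [h1, nuu_cast hq z]
  have := Int.emod_add_mul_ediv z (q : ℤ)
  calc ((z % (q : ℤ) : ℤ) : ZMod q) = ((z - (q : ℤ) * (z / q) : ℤ) : ZMod q) := by
        congr 1; omega
    _ = (z : ZMod q) := by push_cast; simp

/-! ### coefficient of a product of linear forms -/

lemma coeff_topm_prod_linear {ι : Type*} [Fintype ι] [DecidableEq ι]
    {K : Type*} [CommRing K] (q : σ → ℕ) (a : ι → σ → K) :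
    coeff (topm q) (∏ s : ι, ∑ t, C (a s t) * X t)
    = ∑ g ∈ (Finset.univ : Finset (ι → σ)).filter
        (fun g => ∀ t, (Finset.univ.filter (fun s => g s = t)).card = q t - 1),
      ∏ s, a s (g s) := by
  classical
  rw [Finset.prod_univ_sum]
  have term : ∀ g : ι → σ, (∏ s, (C (a s (g s)) * X (g s)))
      = monomial (Finsupp.equivFunOnFinite.symm
          fun t => (Finset.univ.filter (fun s => g s = t)).card) (∏ s, a s (g s)) := by
    intro g
    rw [Finset.prod_mul_distrib, ← map_prod]
    have hX : (∏ s, (X (g s) : MvPolynomial σ K))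
        = ∏ t, (X t : MvPolynomial σ K) ^ (Finset.univ.filter (fun s => g s = t)).card := by
      rw [← Finset.prod_fiberwise Finset.univ g (fun s => (X (g s) : MvPolynomial σ K))]
      refine Finset.prod_congr rfl fun t _ => ?_
      rw [Finset.prod_congr rfl (fun s hs => by
        rw [(Finset.mem_filter.mp hs).2] : ∀ s ∈ Finset.univ.filter (fun s => g s = t),
          (X (g s) : MvPolynomial σ K) = X t), Finset.prod_const]
    rw [hX, prod_X_pow_eq, MvPolynomial.C_mul_monomial, mul_one]
  simp_rw [term, MvPolynomial.coeff_sum, MvPolynomial.coeff_monomial]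
  have cond : ∀ g : ι → σ,
      ((Finsupp.equivFunOnFinite.symm fun t => (Finset.univ.filter (fun s => g s = t)).card)
        = topm q)
      ↔ (∀ t, (Finset.univ.filter (fun s => g s = t)).card = q t - 1) := by
    intro g
    unfold topm
    rw [Equiv.apply_eq_iff_eq]
    exact funext_iff
  rw [Fintype.piFinset_univ, Finset.sum_filter]
  exact Finset.sum_congr rfl fun g _ => if_congr (cond g) rfl rfl

/-! ### the fiber bijection -/

lemma fiber_bij {M : Type*} [CommSemiring M] {k l : ℕ} (q : Fin l → ℕ)
    (hk : ∑ t, (q t - 1) ≤ k) (v : Fin k → Fin l → M) :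
    ∑ g ∈ (Finset.univ : Finset (Fin k → Fin l)).filter
        (fun g => ∀ t, (Finset.univ.filter (fun s => g s = t)).card = q t - 1),
      ∏ s, v s (g s)
    = ∑ T ∈ (Finset.univ : Finset (Fin l → Finset (Fin k))).filter
        (fun T => Finset.univ.biUnion T = Finset.univ ∧ ∀ t, (T t).card = q t - 1),
      ∏ t, ∏ s ∈ T t, v s t := by
  classical
  refine Finset.sum_bij (fun g _ => fun t => Finset.univ.filter (fun s => g s = t))
    ?_ ?_ ?_ ?_
  · -- maps into the target filter
    intro g hg
    rw [Finset.mem_filter] at hg ⊢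
    refine ⟨Finset.mem_univ _, ?_, hg.2⟩
    ext s
    simp only [Finset.mem_biUnion, Finset.mem_filter, Finset.mem_univ, true_and]
    exact ⟨fun _ => trivial, fun _ => ⟨g s, rfl⟩⟩
  · -- injective
    intro g₁ h₁ g₂ h₂ heq
    have heq' : (fun t => Finset.univ.filter (fun s => g₁ s = t))
        = fun t => Finset.univ.filter (fun s => g₂ s = t) := heq
    funext s
    have : s ∈ Finset.univ.filter (fun s' => g₂ s' = g₁ s) := by
      rw [← congrFun heq' (g₁ s)]
      simp
    exact ((Finset.mem_filter.mp this).2).symm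
  · -- surjective
    intro T hT
    rw [Finset.mem_filter] at hT
    obtain ⟨-, hunion, hcard⟩ := hT
    have hsum : ∑ t, (T t).card = ∑ t, (q t - 1) := Finset.sum_congr rfl fun t _ => hcard t
    have hkD : k ≤ ∑ t, (q t - 1) := by
      calc k = (Finset.univ : Finset (Fin k)).card := (Finset.card_fin k).symm
        _ = (Finset.univ.biUnion T).card := by rw [hunion]
        _ ≤ ∑ t, (T t).card := Finset.card_biUnion_le
        _ = ∑ t, (q t - 1) := hsum
    have hkeq : k = ∑ t, (q t - 1) := le_antisymm hkD hk
    -- double counting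
    have hdouble : ∑ s : Fin k, (Finset.univ.filter (fun t => s ∈ T t)).card
        = ∑ t, (T t).card := by
      simp_rw [Finset.card_filter]
      rw [Finset.sum_comm]
      refine Finset.sum_congr rfl fun t _ => ?_
      rw [Finset.sum_ite_mem, Finset.univ_inter, Finset.card_eq_sum_ones]
    have hone : ∀ s : Fin k, 1 ≤ (Finset.univ.filter (fun t => s ∈ T t)).card := by
      intro s
      have hs : s ∈ Finset.univ.biUnion T := by rw [hunion]; exact Finset.mem_univ s
      rw [Finset.mem_biUnion] at hs
      obtain ⟨t, -, ht⟩ := hs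
      exact Finset.card_pos.mpr ⟨t, by simp [ht]⟩
    have htot : ∑ s : Fin k, (Finset.univ.filter (fun t => s ∈ T t)).card
        = ∑ s : Fin k, 1 := by
      rw [hdouble, hsum]
      simpa using hkeq.symm
    have heach : ∀ s : Fin k, (Finset.univ.filter (fun t => s ∈ T t)).card = 1 := by
      intro s
      by_contra hc
      have h2 : 2 ≤ (Finset.univ.filter (fun t => s ∈ T t)).card := by
        have := hone s; omega
      have : ∑ s : Fin k, 1 < ∑ s : Fin k, (Finset.univ.filter (fun t => s ∈ T t)).card := by
        refine Finset.sum_lt_sum (fun i _ => hone i) ⟨s, Finset.mem_univ s, by omega⟩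
      omega
    have hex : ∀ s : Fin k, ∃ ts, Finset.univ.filter (fun t => s ∈ T t) = {ts} :=
      fun s => Finset.card_eq_one.mp (heach s)
    choose gg hgg using hex
    have hmemT : ∀ s, s ∈ T (gg s) := by
      intro s
      have : gg s ∈ Finset.univ.filter (fun t => s ∈ T t) := by rw [hgg s]; simp
      exact (Finset.mem_filter.mp this).2
    have huniq : ∀ s t, s ∈ T t → t = gg s := by
      intro s t ht
      have : t ∈ Finset.univ.filter (fun t => s ∈ T t) := by simp [ht]
      rw [hgg s] at this
      simpa using this
    have hfib : (fun t => Finset.univ.filter (fun s => gg s = t)) = T := by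
      funext t
      ext s
      simp only [Finset.mem_filter, Finset.mem_univ, true_and]
      constructor
      · rintro rfl; exact hmemT s
      · intro hs; exact (huniq s t hs).symm
    refine ⟨gg, ?_, hfib⟩
    rw [Finset.mem_filter]
    refine ⟨Finset.mem_univ _, fun t => ?_⟩
    rw [show Finset.univ.filter (fun s => gg s = t) = T t from congrFun hfib t]
    exact hcard t
  · -- values agree
    intro g hg
    rw [← Finset.prod_fiberwise Finset.univ g (fun s => v s (g s))]
    refine Finset.prod_congr rfl fun t _ => ?_
    refine Finset.prod_congr rfl fun s hs => ?_
    rw [(Finset.mem_filter.mp hs).2]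



/-! ### master lemma -/

lemma master {p : ℕ} [Fact p.Prime] {l k : ℕ} (hp : p.Prime)
    (h : Fin l → ℕ) (hh : ∀ t, 0 < h t) (hk : ∑ t, (p ^ h t - 1) ≤ k)
    (c : Fin k → Fin l → ℤ) (c0 : Fin l → ℤ) :
    (∑ I ∈ (Finset.univ : Finset (Fin k)).powerset.filter
        (fun I => ∀ t, ((p : ℤ) ^ h t) ∣ (∑ s ∈ I, c s t) - c0 t),
      (-1 : ZMod p) ^ I.card)
    = ∑ T ∈ (Finset.univ : Finset (Fin l → Finset (Fin k))).filter
        (fun T => Finset.univ.biUnion T = Finset.univ ∧ ∀ t, (T t).card = p ^ h t - 1),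
      ∏ t, ∏ s ∈ T t, ((c s t : ℤ) : ZMod p) := by
  classical
  have hq0 : ∀ t : Fin l, 0 < p ^ h t := fun t => pow_pos hp.pos _
  have hqe : ∀ t : Fin l, ∃ e, p ^ h t = p ^ e := fun t => ⟨h t, rfl⟩
  -- replace (p:ℤ)^h t by ↑(p^h t)
  have hdvd_iff : ∀ (I : Finset (Fin k)) (t : Fin l),
      (((p : ℤ)) ^ h t ∣ (∑ s ∈ I, c s t) - c0 t)
      ↔ (((p ^ h t : ℕ) : ℤ) ∣ (∑ s ∈ I, c s t) - c0 t) := by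
    intro I t; rw [Nat.cast_pow]
  -- data
  set wexp : Fin k → Fin l → ℕ := fun s t => nuu (p ^ h t) (c s t) with hwexp
  set Hexp : Fin l → ℕ := fun t => nuu (p ^ h t) (-(c0 t) - 1) with hHexp
  set w : Fin k → MvPolynomial (Fin l) (ZMod p) := fun s => W (ZMod p) (wexp s) with hw
  set HH : MvPolynomial (Fin l) (ZMod p) := W (ZMod p) Hexp with hHH
  set G : MvPolynomial (Fin l) (ZMod p) := ∏ s : Fin k, (1 - w s) with hG
  set L : Fin k → MvPolynomial (Fin l) (ZMod p) :=
    fun s => ∑ t, C ((c s t : ℤ) : ZMod p) * X t with hL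
  set Q : Fin l → ℕ := fun t => p ^ h t with hQ
  -- cast lemma for wexp
  have hwcast : ∀ s t, ((wexp s t : ℕ) : ZMod p) = ((c s t : ℤ) : ZMod p) := by
    intro s t
    have h1 : ((wexp s t : ℕ) : ℤ) = c s t % ((p ^ h t : ℕ) : ℤ) := nuu_cast (hq0 t) _
    have hQ0 : ((p : ZMod p)) ^ h t = 0 := by
      rw [ZMod.natCast_self, zero_pow (hh t).ne']
    have h2 : ((wexp s t : ℕ) : ZMod p) = (((wexp s t : ℕ) : ℤ) : ZMod p) := by
      push_cast; rfl
    rw [h2, h1, Int.emod_def]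
    push_cast
    rw [hQ0]
    ring
  -- Step A
  have stepA : coeff (topm Q) (HH * G)
      = ∑ I ∈ (Finset.univ : Finset (Fin k)).powerset.filter
          (fun I => ∀ t, ((p : ℤ) ^ h t) ∣ (∑ s ∈ I, c s t) - c0 t),
        (-1 : ZMod p) ^ I.card := by
    have expandG : G = ∑ I ∈ (Finset.univ : Finset (Fin k)).powerset,
        (-1 : MvPolynomial (Fin l) (ZMod p)) ^ I.card * ∏ s ∈ I, w s := by
      rw [hG]
      calc ∏ s : Fin k, (1 - w s) = ∏ s : Fin k, ((- w s) + 1) := by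
            refine Finset.prod_congr rfl fun s _ => by ring
        _ = ∑ I ∈ (Finset.univ : Finset (Fin k)).powerset,
              (∏ s ∈ I, (- w s)) * ∏ s ∈ Finset.univ \ I, 1 := Finset.prod_add _ _ _
        _ = _ := by
            refine Finset.sum_congr rfl fun I _ => ?_
            rw [Finset.prod_const_one, mul_one]
            calc ∏ s ∈ I, (- w s) = ∏ s ∈ I, ((-1) * w s) :=
                  Finset.prod_congr rfl fun s _ => by ring
              _ = (∏ _s ∈ I, (-1 : MvPolynomial (Fin l) (ZMod p))) * ∏ s ∈ I, w s :=
                  Finset.prod_mul_distrib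
              _ = (-1) ^ I.card * ∏ s ∈ I, w s := by rw [Finset.prod_const]
    rw [expandG, Finset.mul_sum, MvPolynomial.coeff_sum, Finset.sum_filter]
    refine Finset.sum_congr rfl fun I _ => ?_
    have hprod : HH * ((-1 : MvPolynomial (Fin l) (ZMod p)) ^ I.card * ∏ s ∈ I, w s)
        = (C ((-1 : ZMod p) ^ I.card)) * (HH * ∏ s ∈ I, w s) := by
      rw [map_pow, map_neg, map_one]; ring
    rw [hprod, MvPolynomial.coeff_C_mul]
    have hcore : coeff (topm Q) (HH * ∏ s ∈ I, w s)
        = if (∀ t, ((p : ℤ) ^ h t) ∣ (∑ s ∈ I, c s t) - c0 t) then 1 else 0 := by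
      have hWW : HH * ∏ s ∈ I, w s
          = W (ZMod p) (fun t => Hexp t + ∑ s ∈ I, wexp s t) := by
        rw [hHH, hw, prod_W I wexp, W_mul]
      set m' : Fin l → ℕ := fun t => nuu (p ^ h t) ((∑ s ∈ I, c s t) - c0 t - 1) with hm'
      have hcongr : ∀ t, (Hexp t + ∑ s ∈ I, wexp s t) ≡ m' t [MOD Q t] := by
        intro t
        rw [← ZMod.natCast_eq_natCast_iff]
        push_cast
        have e1 : ((Hexp t : ℕ) : ZMod (Q t)) = ((-(c0 t) - 1 : ℤ) : ZMod (Q t)) :=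
          nuu_castZMod (hq0 t) _
        have e2 : ∀ s : Fin k, ((wexp s t : ℕ) : ZMod (Q t)) = ((c s t : ℤ) : ZMod (Q t)) :=
          fun s => nuu_castZMod (hq0 t) _
        have e3 : ((m' t : ℕ) : ZMod (Q t))
            = (((∑ s ∈ I, c s t) - c0 t - 1 : ℤ) : ZMod (Q t)) := nuu_castZMod (hq0 t) _
        rw [e1, e3]
        simp_rw [e2]
        push_cast
        ring
      have hdiff := W_congr (q := Q) (n := (∑ t, (Q t - 1)) + 1) hqe
        (fun t => Hexp t + ∑ s ∈ I, wexp s t) m' hcongr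
      rw [hWW, coeff_topm_congr hq0 (Nat.lt_succ_self _) hdiff]
      have hiff : (∀ t, m' t = Q t - 1)
          ↔ (∀ t, ((p : ℤ) ^ h t) ∣ (∑ s ∈ I, c s t) - c0 t) := by
        refine forall_congr' fun t => ?_
        have h5 := nuu_eq_iff (hq0 t) ((∑ s ∈ I, c s t) - c0 t - 1)
        rw [show (∑ s ∈ I, c s t) - c0 t - 1 + 1 = (∑ s ∈ I, c s t) - c0 t by ring] at h5
        rw [hm', h5, hdvd_iff I t]
      rw [coeff_topm_W_ind hq0 m' (fun t => nuu_lt (hq0 t) _)]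
      by_cases hcond : ∀ t, ((p : ℤ) ^ h t) ∣ (∑ s ∈ I, c s t) - c0 t
      · rw [if_pos (hiff.mpr hcond), if_pos hcond]
      · rw [if_neg (fun hx => hcond (hiff.mp hx)), if_neg hcond]
    rw [hcore, mul_ite, mul_one, mul_zero]
  -- Step B
  have hL1 : ∀ s : Fin k, (- L s) ∈ E Q 1 := by
    intro s
    refine Submodule.neg_mem _ ?_
    rw [hL]
    exact Submodule.sum_mem _ fun t _ => smul_X_mem_E _ t
  have hw1 : ∀ s : Fin k, (1 - w s) ∈ E Q 1 := by
    intro s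
    have h1 := W_sub_one_mem (q := Q) (K := ZMod p) (wexp s)
    have h2 : (1 : MvPolynomial (Fin l) (ZMod p)) - w s = -(W (ZMod p) (wexp s) - 1) := by
      rw [hw]; ring
    rw [h2]
    exact Submodule.neg_mem _ h1
  have hwL2 : ∀ s : Fin k, (1 - w s) - (- L s) ∈ E Q 2 := by
    intro s
    have hexp := W_expand (q := Q) (K := ZMod p) (wexp s)
    have hLs : L s = ∑ t, C ((wexp s t : ZMod p)) * X t := by
      rw [hL]
      exact Finset.sum_congr rfl fun t _ => by rw [hwcast s t]
    have h2 : (1 - w s) - (- L s)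
        = -((W (ZMod p) (wexp s) - 1) - ∑ t, C ((wexp s t : ZMod p)) * X t) := by
      rw [hLs, hw]; ring
    rw [h2]
    exact Submodule.neg_mem _ (by
      have h3 : (W (ZMod p) (wexp s) - 1) - ∑ t, C ((wexp s t : ZMod p)) * X t
          = W (ZMod p) (wexp s) - 1 - ∑ t, C ((wexp s t : ZMod p)) * X t := by ring
      rw [h3]; exact hexp)
  have stepB : coeff (topm Q) (HH * G)
      = (-1 : ZMod p) ^ k * coeff (topm Q) (∏ s : Fin k, L s) := by
    have hGL : G - ∏ s : Fin k, (- L s) ∈ E Q (k + 1) := by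
      have := prod_sub_prod_mem_E (Finset.univ : Finset (Fin k)) _ _
        (fun s _ => hw1 s) (fun s _ => hL1 s) (fun s _ => hwL2 s)
      rw [Finset.card_univ, Fintype.card_fin] at this
      exact this
    have hprodL : (∏ s : Fin k, (- L s)) ∈ E Q k := by
      have := prod_mem_E (Finset.univ : Finset (Fin k)) _ (fun s _ => hL1 s)
      rwa [Finset.card_univ, Fintype.card_fin] at this
    have hfull : HH * G - ∏ s : Fin k, (- L s) ∈ E Q (k + 1) := by
      have key : HH * G - ∏ s : Fin k, (- L s)
          = HH * (G - ∏ s : Fin k, (- L s)) + (HH - 1) * ∏ s : Fin k, (- L s) := by ring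
      rw [key]
      refine Submodule.add_mem _ (Ideal.mul_mem_left _ _ hGL) ?_
      have h4 : (HH - 1) ∈ E Q 1 := by rw [hHH]; exact W_sub_one_mem Hexp
      have := mul_mem_E h4 hprodL
      rwa [add_comm 1 k] at this
    have hDlt : ∑ t, (Q t - 1) < k + 1 := by
      have : ∑ t, (Q t - 1) = ∑ t, (p ^ h t - 1) := rfl
      omega
    rw [coeff_topm_congr hq0 hDlt hfull]
    have hsign : (∏ s : Fin k, (- L s)) = C ((-1 : ZMod p) ^ k) * ∏ s : Fin k, L s := by
      rw [map_pow, map_neg, map_one]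
      calc ∏ s : Fin k, (- L s) = ∏ s : Fin k, ((-1) * L s) :=
            Finset.prod_congr rfl fun s _ => by ring
        _ = (∏ _s : Fin k, (-1 : MvPolynomial (Fin l) (ZMod p))) * ∏ s : Fin k, L s :=
            Finset.prod_mul_distrib
        _ = _ := by rw [Finset.prod_const, Finset.card_univ, Fintype.card_fin]
    rw [hsign, MvPolynomial.coeff_C_mul]
  -- Step C
  have stepC := coeff_topm_prod_linear (σ := Fin l) (ι := Fin k) Q
    (fun s t => ((c s t : ℤ) : ZMod p))
  -- Step D
  have stepD := fiber_bij (M := ZMod p) Q hk (fun s t => ((c s t : ℤ) : ZMod p))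
  -- parity
  have parity : (-1 : ZMod p) ^ k *
      (∑ T ∈ (Finset.univ : Finset (Fin l → Finset (Fin k))).filter
        (fun T => Finset.univ.biUnion T = Finset.univ ∧ ∀ t, (T t).card = Q t - 1),
      ∏ t, ∏ s ∈ T t, ((c s t : ℤ) : ZMod p))
      = ∑ T ∈ (Finset.univ : Finset (Fin l → Finset (Fin k))).filter
        (fun T => Finset.univ.biUnion T = Finset.univ ∧ ∀ t, (T t).card = Q t - 1),
      ∏ t, ∏ s ∈ T t, ((c s t : ℤ) : ZMod p) := by
    by_cases hne : ((Finset.univ : Finset (Fin l → Finset (Fin k))).filter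
        (fun T => Finset.univ.biUnion T = Finset.univ ∧ ∀ t, (T t).card = Q t - 1)).Nonempty
    · obtain ⟨T, hT⟩ := hne
      rw [Finset.mem_filter] at hT
      obtain ⟨-, hunion, hcard⟩ := hT
      have hkD : k ≤ ∑ t, (Q t - 1) := by
        calc k = (Finset.univ : Finset (Fin k)).card := (Finset.card_fin k).symm
          _ = (Finset.univ.biUnion T).card := by rw [hunion]
          _ ≤ ∑ t, (T t).card := Finset.card_biUnion_le
          _ = ∑ t, (Q t - 1) := Finset.sum_congr rfl fun t _ => hcard t
      have hkeq : k = ∑ t, (Q t - 1) := le_antisymm hkD hk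
      have hone : (-1 : ZMod p) ^ k = 1 := by
        rcases hp.eq_two_or_odd' with h2 | hodd
        · subst h2
          rw [CharTwo.neg_eq (1 : ZMod 2), one_pow]
        · have heven : Even k := by
            rw [hkeq]
            rw [Finset.even_sum_iff_even_card_odd]
            have hempty : (Finset.univ.filter fun t : Fin l => Odd (Q t - 1)) = ∅ := by
              rw [Finset.filter_eq_empty_iff]
              intro t _
              rw [Nat.not_odd_iff_even]
              exact Nat.Odd.sub_odd (hodd.pow) odd_one
            rw [hempty]
            simp
          exact heven.neg_one_pow
      rw [hone, one_mul]
    · rw [Finset.not_nonempty_iff_eq_empty] at hne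
      rw [hne]
      simp
  rw [← stepA, stepB]
  simp only [hL]
  rw [stepC, ← parity]
  congr 1
  convert stepD using 2
  congr!

end Sun32


/-- **Theorem 3.2** (Sun). -/
theorem sun_theorem3_2 (p : ℕ) (hp : p.Prime) (k l : ℕ) (hl : 0 < l)
    (h : Fin l → ℕ) (hh : ∀ t, 0 < h t)
    (hk : ∑ t, (p ^ h t - 1) ≤ k)
    (c : Fin k → Fin l → ℤ) (c0 : Fin l → ℤ) :
    (∑ I ∈ (Finset.univ : Finset (Fin k)).powerset.filter
        (fun I => ∀ t, (p ^ h t : ℤ) ∣ (∑ s ∈ I, c s t) - c0 t),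
      (-1 : ℤ) ^ I.card)
    ≡
    (∑ T ∈ (Finset.univ : Finset (Fin l → Finset (Fin k))).filter
        (fun T => Finset.univ.biUnion T = Finset.univ ∧ ∀ t, (T t).card = p ^ h t - 1),
      ∏ t, ∏ s ∈ T t, c s t) [ZMOD (p : ℤ)] := by
  haveI : Fact p.Prime := ⟨hp⟩
  rw [← ZMod.intCast_eq_intCast_iff]
  push_cast
  exact Sun32.master hp h hh hk c c0
end

section
/- Let p be a prime and h a positive integer. For any integers c, c_1,...,c_{p^h−1}, one has ∑ (−1)^{|I|} ≡ c_1 c_2 ⋯ c_{p^h−1} (mod p), where the sum is over all subsets I ⊆ {1,...,p^h−1} such that p^h divides ∑_{s∈I} c_s − c. -/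
open Finset

lemma aux_poly (p h : ℕ) [Fact p.Prime] :
    (Polynomial.X - 1 : Polynomial (ZMod p)) ^ (p ^ h - 1)
      = ∑ i ∈ Finset.range (p ^ h), Polynomial.X ^ i := by
  have hp := (Fact.out : p.Prime)
  have hpos : 0 < p ^ h := pow_pos hp.pos h
  have h1 : (Polynomial.X - 1 : Polynomial (ZMod p)) ^ (p ^ h)
      = Polynomial.X ^ (p ^ h) - 1 := by
    simpa using sub_pow_char_pow (Polynomial.X : Polynomial (ZMod p)) 1 h
  have hne : (Polynomial.X - 1 : Polynomial (ZMod p)) ≠ 0 := by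
    simpa using Polynomial.X_sub_C_ne_zero (1 : ZMod p)
  refine mul_right_cancel₀ hne ?_
  rw [← pow_succ, Nat.sub_add_cancel hpos, h1, geom_sum_mul]

lemma aux_sum_univ (n : ℕ) [NeZero n] {M : Type*} [AddCommMonoid M] (f : ZMod n → M) :
    ∑ i ∈ Finset.range n, f (i : ZMod n) = ∑ k : ZMod n, f k := by
  refine Finset.sum_nbij' (fun i => (i : ZMod n)) (fun k => k.val) ?_ ?_ ?_ ?_ ?_
  · intro a _; exact Finset.mem_univ _
  · intro a _; exact Finset.mem_range.2 (ZMod.val_lt a)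
  · intro a ha; exact ZMod.val_cast_of_lt (Finset.mem_range.1 ha)
  · intro a _; exact ZMod.natCast_rightInverse a
  · intro a _; rfl

lemma aux_neg_one (p h : ℕ) [Fact p.Prime] : ((-1 : ZMod p)) ^ (p ^ h - 1) = 1 := by
  have hp := (Fact.out : p.Prime)
  rcases hp.eq_two_or_odd' with h2 | hodd
  · subst h2; rw [show (-1 : ZMod 2) = 1 from rfl, one_pow]
  · exact (Nat.Odd.sub_odd (hodd.pow) odd_one).neg_one_pow


lemma addMA_sum_apply {k G ι : Type*} [Semiring k] (S : Finset ι)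
    (f : ι → AddMonoidAlgebra k G) (γ : G) :
    (∑ i ∈ S, f i).coeff γ = ∑ i ∈ S, (f i).coeff γ := by
  rw [AddMonoidAlgebra.coeff_sum, Finsupp.finset_sum_apply]

lemma addMA_single_apply {k G : Type*} [Semiring k] [DecidableEq G] (a γ : G) (b : k) :
    (AddMonoidAlgebra.single a b).coeff γ = if a = γ then b else 0 :=
  Finsupp.single_apply

lemma aux_main (p h : ℕ) [Fact p.Prime] (a : Fin (p ^ h - 1) → ℕ) :
    ∏ s, ((1 : AddMonoidAlgebra (ZMod p) (ZMod (p ^ h)))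
        - AddMonoidAlgebra.single ((a s : ℕ) : ZMod (p ^ h)) 1)
      = (algebraMap (ZMod p) (AddMonoidAlgebra (ZMod p) (ZMod (p ^ h))))
          (∏ s, ((a s : ZMod p)))
        * ∑ k : ZMod (p ^ h), AddMonoidAlgebra.single k (1 : ZMod p) := by
  classical
  have hp := (Fact.out : p.Prime)
  have hpos : 0 < p ^ h := pow_pos hp.pos h
  haveI : NeZero (p ^ h) := ⟨hpos.ne'⟩
  set R := AddMonoidAlgebra (ZMod p) (ZMod (p ^ h)) with hR
  have halg : Function.Injective (algebraMap (ZMod p) R) := by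
    rw [AddMonoidAlgebra.coe_algebraMap]
    exact (AddMonoidAlgebra.single_right_injective (m := (0 : ZMod (p ^ h)))).comp (fun x y hxy => hxy)
  haveI : CharP R p := charP_of_injective_algebraMap halg p
  set X : R := AddMonoidAlgebra.single (1 : ZMod (p ^ h)) (1 : ZMod p) with hX
  have hXpow : ∀ m : ℕ, X ^ m = AddMonoidAlgebra.single ((m : ZMod (p ^ h))) (1 : ZMod p) := by
    intro m
    rw [hX, AddMonoidAlgebra.single_pow, one_pow, nsmul_eq_mul, mul_one]
  have hXn : X ^ (p ^ h) = 1 := by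
    rw [hXpow, ZMod.natCast_self, AddMonoidAlgebra.one_def]
  have hYn : (X - 1) ^ (p ^ h) = 0 := by
    rw [sub_pow_char_pow X 1 h, hXn, one_pow, sub_self]
  have hYm : (X - 1) ^ (p ^ h - 1) = ∑ k : ZMod (p ^ h), AddMonoidAlgebra.single k (1 : ZMod p) := by
    have := congrArg (Polynomial.aeval X) (aux_poly p h)
    rw [map_pow, map_sub, Polynomial.aeval_X, map_one, map_sum] at this
    rw [this, ← aux_sum_univ (p ^ h) (fun k => AddMonoidAlgebra.single k (1 : ZMod p))]
    refine Finset.sum_congr rfl fun i _ => ?_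
    rw [map_pow, Polynomial.aeval_X, hXpow]
  -- geometric factorization
  set G : Fin (p ^ h - 1) → R := fun s => ∑ i ∈ Finset.range (a s), X ^ i with hG
  have hfac : ∀ s, (1 : R) - AddMonoidAlgebra.single ((a s : ℕ) : ZMod (p ^ h)) 1
      = (-(G s)) * (X - 1) := by
    intro s
    rw [hG, neg_mul, geom_sum_mul, hXpow, neg_sub]
  have hprod : ∏ s, ((1 : R) - AddMonoidAlgebra.single ((a s : ℕ) : ZMod (p ^ h)) 1)
      = ((-1 : R) ^ (p ^ h - 1) * ∏ s, G s) * (X - 1) ^ (p ^ h - 1) := by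
    calc ∏ s, ((1 : R) - AddMonoidAlgebra.single ((a s : ℕ) : ZMod (p ^ h)) 1)
        = ∏ s, ((-(G s)) * (X - 1)) := Finset.prod_congr rfl fun s _ => hfac s
      _ = (∏ s, -(G s)) * ∏ (_s : Fin (p ^ h - 1)), (X - 1) := Finset.prod_mul_distrib
      _ = ((-1 : R) ^ (p ^ h - 1) * ∏ s, G s) * (X - 1) ^ (p ^ h - 1) := by
          rw [Finset.prod_const, Finset.card_univ, Fintype.card_fin]
          congr 1
          rw [show (fun s => -(G s)) = fun s => (-1 : R) * G s from funext fun s => by ring,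
            Finset.prod_mul_distrib, Finset.prod_const, Finset.card_univ, Fintype.card_fin]
  -- neg-one power is one
  have hneg : ((-1 : R)) ^ (p ^ h - 1) = 1 := by
    have : ((-1 : R)) = algebraMap (ZMod p) R (-1) := by rw [map_neg, map_one]
    rw [this, ← map_pow, aux_neg_one p h, map_one]
  -- congruence modulo (X - 1)
  have hmem : ∀ s, G s - ((a s : ℕ) : R) ∈ Ideal.span {X - 1} := by
    intro s
    have : G s - ((a s : ℕ) : R) = ∑ i ∈ Finset.range (a s), (X ^ i - 1) := by
      rw [Finset.sum_sub_distrib, Finset.sum_const, Finset.card_range, hG]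
      congr 1
      rw [nsmul_eq_mul, mul_one]
    rw [this]
    refine Ideal.sum_mem _ fun i _ => ?_
    rw [← geom_sum_mul]
    exact Ideal.mem_span_singleton.2 (dvd_mul_left _ _)
  have hquot : (∏ s, G s) - (∏ s, ((a s : ℕ) : R)) ∈ Ideal.span {X - 1} := by
    rw [← Ideal.Quotient.eq]
    rw [map_prod, map_prod]
    refine Finset.prod_congr rfl fun s _ => ?_
    rw [Ideal.Quotient.eq]
    exact hmem s
  obtain ⟨z, hz⟩ := Ideal.mem_span_singleton.1 hquot
  have key : (∏ s, G s) * (X - 1) ^ (p ^ h - 1)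
      = (∏ s, ((a s : ℕ) : R)) * (X - 1) ^ (p ^ h - 1) := by
    have h1 : (∏ s, G s) = (∏ s, ((a s : ℕ) : R)) + (X - 1) * z := by
      rw [← hz]; ring
    rw [h1, add_mul]
    have h0 : (X - 1) ^ (p ^ h - 1) * (X - 1) = 0 := by
      rw [pow_sub_one_mul hpos.ne', hYn]
    have : (X - 1) * z * (X - 1) ^ (p ^ h - 1) = z * ((X - 1) ^ (p ^ h - 1) * (X - 1)) := by
      ring
    rw [this, h0, mul_zero, add_zero]
  have hcast : (∏ s, ((a s : ℕ) : R)) = algebraMap (ZMod p) R (∏ s, ((a s : ZMod p))) := by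
    rw [map_prod]
    exact Finset.prod_congr rfl fun s _ => (map_natCast (algebraMap (ZMod p) R) (a s)).symm
  rw [hprod, mul_assoc, hneg, one_mul, key, hcast, hYm]

/-- **Corollary 3.3(i)** (Sun): Let `p` be a prime and `h ≥ 1`.  For any integers
`c, c₁,…,c_{p^h-1}`,
`∑_{I ⊆ [1,p^h-1], p^h ∣ ∑_{s∈I} c_s - c} (-1)^{|I|} ≡ c₁⋯c_{p^h-1} (mod p)`. -/
theorem sun_corollary3_3i (p : ℕ) (hp : p.Prime) (h : ℕ) (hh : 0 < h)
    (c : ℤ) (cs : Fin (p ^ h - 1) → ℤ) :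
    (∑ I ∈ (Finset.univ : Finset (Fin (p ^ h - 1))).powerset.filter
        (fun I => (p ^ h : ℤ) ∣ (∑ s ∈ I, cs s) - c),
      (-1 : ℤ) ^ I.card)
    ≡ (∏ s, cs s) [ZMOD (p : ℤ)] := by
  classical
  haveI : Fact p.Prime := ⟨hp⟩
  have hpos : 0 < p ^ h := pow_pos hp.pos h
  haveI : NeZero (p ^ h) := ⟨hpos.ne'⟩
  have hNz : ((p : ℤ) ^ h) ≠ 0 := (pow_pos (Int.natCast_pos.2 hp.pos) h).ne'
  set a : Fin (p ^ h - 1) → ℕ := fun s => ((cs s) % ((p : ℤ) ^ h)).toNat with ha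
  have haZ : ∀ s, ((a s : ℕ) : ℤ) = cs s % ((p : ℤ) ^ h) := fun s =>
    Int.toNat_of_nonneg (Int.emod_nonneg _ hNz)
  have ha1 : ∀ s, ((a s : ℕ) : ZMod (p ^ h)) = ((cs s : ℤ) : ZMod (p ^ h)) := by
    intro s
    have h1 : ((a s : ℕ) : ZMod (p ^ h)) = (((a s : ℕ) : ℤ) : ZMod (p ^ h)) := by
      push_cast; ring
    rw [h1, haZ]
    have h2 : ((p : ℤ) ^ h) = ((p ^ h : ℕ) : ℤ) := by push_cast; ring
    rw [h2, ZMod.intCast_mod]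
  have ha2 : ∀ s, ((a s : ℕ) : ZMod p) = ((cs s : ℤ) : ZMod p) := by
    intro s
    have h1 : ((a s : ℕ) : ZMod p) = (((a s : ℕ) : ℤ) : ZMod p) := by
      push_cast; ring
    rw [h1, haZ]
    refine (ZMod.intCast_eq_intCast_iff _ _ _).2 ?_
    exact Int.emod_emod_of_dvd _ (dvd_pow_self (p : ℤ) hh.ne')
  -- expansion of the product
  have hexp : ∏ s, ((1 : AddMonoidAlgebra (ZMod p) (ZMod (p ^ h)))
        - AddMonoidAlgebra.single ((a s : ℕ) : ZMod (p ^ h)) 1)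
      = ∑ I ∈ (Finset.univ : Finset (Fin (p ^ h - 1))).powerset,
          AddMonoidAlgebra.single (((∑ s ∈ I, cs s : ℤ)) : ZMod (p ^ h))
            ((-1 : ZMod p) ^ I.card) := by
    have e1 : ∀ s : Fin (p ^ h - 1), (1 : AddMonoidAlgebra (ZMod p) (ZMod (p ^ h)))
        - AddMonoidAlgebra.single ((a s : ℕ) : ZMod (p ^ h)) 1
        = (-(AddMonoidAlgebra.single ((a s : ℕ) : ZMod (p ^ h)) (1 : ZMod p))) + 1 := by
      intro s; ring
    rw [Finset.prod_congr rfl fun s _ => e1 s, Finset.prod_add]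
    refine Finset.sum_congr rfl fun I _ => ?_
    rw [Finset.prod_const_one, mul_one]
    have e2 : ∏ s ∈ I, (-(AddMonoidAlgebra.single ((a s : ℕ) : ZMod (p ^ h)) (1 : ZMod p)))
        = (-1 : AddMonoidAlgebra (ZMod p) (ZMod (p ^ h))) ^ I.card
          * ∏ s ∈ I, AddMonoidAlgebra.single ((a s : ℕ) : ZMod (p ^ h)) (1 : ZMod p) := by
      rw [Finset.prod_congr rfl (fun s _ => (neg_one_mul _).symm :
          ∀ s ∈ I, -(AddMonoidAlgebra.single ((a s : ℕ) : ZMod (p ^ h)) (1 : ZMod p))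
            = (-1 : AddMonoidAlgebra (ZMod p) (ZMod (p ^ h))) * _),
        Finset.prod_mul_distrib, Finset.prod_const]
    rw [e2, AddMonoidAlgebra.prod_single, Finset.prod_const_one]
    have e3 : (-1 : AddMonoidAlgebra (ZMod p) (ZMod (p ^ h))) ^ I.card
        = AddMonoidAlgebra.single (0 : ZMod (p ^ h)) ((-1 : ZMod p) ^ I.card) := by
      have h4 : AddMonoidAlgebra.single (0 : ZMod (p ^ h)) (-1 : ZMod p)
          = -AddMonoidAlgebra.single (0 : ZMod (p ^ h)) (1 : ZMod p) :=
        AddMonoidAlgebra.single_neg 0 1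
      have : (-1 : AddMonoidAlgebra (ZMod p) (ZMod (p ^ h)))
          = AddMonoidAlgebra.single (0 : ZMod (p ^ h)) (-1 : ZMod p) := by
        rw [h4, ← AddMonoidAlgebra.one_def]
      rw [this, AddMonoidAlgebra.single_pow, smul_zero]
    rw [e3, AddMonoidAlgebra.single_mul_single, zero_add, mul_one]
    congr 1
    rw [show (∑ s ∈ I, ((a s : ℕ) : ZMod (p ^ h))) = ∑ s ∈ I, ((cs s : ℤ) : ZMod (p ^ h))
        from Finset.sum_congr rfl fun s _ => ha1 s]
    push_cast
    ring
  have key := (hexp.symm).trans (aux_main p h a)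
  have hrhs : (algebraMap (ZMod p) (AddMonoidAlgebra (ZMod p) (ZMod (p ^ h))))
        (∏ s, ((a s : ZMod p)))
      * ∑ k : ZMod (p ^ h), AddMonoidAlgebra.single k (1 : ZMod p)
      = ∑ k : ZMod (p ^ h), AddMonoidAlgebra.single k (∏ s, ((a s : ZMod p))) := by
    rw [AddMonoidAlgebra.coe_algebraMap]
    simp only [Function.comp_apply, Algebra.algebraMap_self, RingHom.id_apply, Finset.mul_sum]
    refine Finset.sum_congr rfl fun k _ => ?_
    rw [AddMonoidAlgebra.single_mul_single, zero_add, mul_one]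
  rw [hrhs] at key
  have keyγ : (∑ I ∈ (Finset.univ : Finset (Fin (p ^ h - 1))).powerset,
        if ((∑ s ∈ I, cs s : ℤ) : ZMod (p ^ h)) = ((c : ℤ) : ZMod (p ^ h))
          then ((-1 : ZMod p)) ^ I.card else 0)
      = ∏ s, ((a s : ZMod p)) := by
    have h1 := congrArg
      (fun x : AddMonoidAlgebra (ZMod p) (ZMod (p ^ h)) => x.coeff ((c : ℤ) : ZMod (p ^ h))) key
    simp only [addMA_sum_apply, addMA_single_apply] at h1
    rw [h1, Finset.sum_ite_eq' Finset.univ]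
    exact if_pos (Finset.mem_univ _)
  rw [← Finset.sum_filter] at keyγ
  have hfilters : ((Finset.univ : Finset (Fin (p ^ h - 1))).powerset.filter
        fun I => (((∑ s ∈ I, cs s : ℤ)) : ZMod (p ^ h)) = ((c : ℤ) : ZMod (p ^ h)))
      = (Finset.univ : Finset (Fin (p ^ h - 1))).powerset.filter
        (fun I => (p ^ h : ℤ) ∣ (∑ s ∈ I, cs s) - c) := by
    refine Finset.filter_congr fun I _ => ?_
    rw [ZMod.intCast_eq_intCast_iff]
    constructor
    · intro hmod
      have hd : ((p ^ h : ℕ) : ℤ) ∣ (∑ s ∈ I, cs s) - c := (Int.ModEq.symm hmod).dvd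
      exact_mod_cast hd
    · intro hdvd
      have hd : ((p ^ h : ℕ) : ℤ) ∣ c - (∑ s ∈ I, cs s) := by
        rw [dvd_sub_comm]; exact_mod_cast hdvd
      exact Int.modEq_iff_dvd.2 hd
  rw [hfilters] at keyγ
  refine (ZMod.intCast_eq_intCast_iff _ _ _).1 ?_
  push_cast
  rw [keyγ]
  exact Finset.prod_congr rfl fun s _ => ha2 s
end

section
/- Let p be a prime and h a positive integer. For any integers c, c_1,...,c_{2p^h−2}, the number of subsets I ⊆ {1,...,2p^h−2} with |I| = p^h − 1 and p^h dividing ∑_{s∈I} c_s − c is congruent modulo p to the coefficient of x^{p^h−1} in the polynomial ∏_{s=1}^{2p^h−2} (x − c_s) ∈ ℤ[x]. -/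
open Polynomial Finset

lemma sunA {p : ℕ} (hp : p.Prime) {h r : ℕ} (hh : 0 < h) (hr : 0 < r) (hrq : r < p ^ h) :
    p ∣ (p ^ h - 1 + r).choose (p ^ h - 1) := by
  haveI : Fact p.Prime := ⟨hp⟩
  haveI : NeZero p := ⟨hp.pos.ne'⟩
  rw [← ZMod.natCast_eq_zero_iff]
  have hq2 : 2 ≤ p ^ h := by
    calc 2 ≤ p := hp.two_le
    _ ≤ p ^ h := Nat.le_self_pow hh.ne' p
  have key : (((X + 1 : (ZMod p)[X]) ^ (p ^ h - 1 + r)).coeff (p ^ h - 1))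
      = ((p ^ h - 1 + r).choose (p ^ h - 1) : ZMod p) := coeff_X_add_one_pow _ _ _
  rw [← key]
  have hexp : p ^ h - 1 + r = p ^ h + (r - 1) := by omega
  rw [hexp, pow_add, add_pow_char_pow, one_pow, add_mul, coeff_add, one_mul]
  have h1 : ((X : (ZMod p)[X]) ^ p ^ h * (X + 1) ^ (r - 1)).coeff (p ^ h - 1) = 0 := by
    rw [mul_comm, coeff_mul_X_pow']
    simp only [if_neg (by omega : ¬ p ^ h ≤ p ^ h - 1)]
  have h2 : (((X + 1 : (ZMod p)[X])) ^ (r - 1)).coeff (p ^ h - 1) = 0 := by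
    rw [coeff_X_add_one_pow, Nat.choose_eq_zero_of_lt (by omega)]
    exact Nat.cast_zero
  rw [h1, h2, add_zero]

-- counting lemma
lemma sunCount {α : Type*} [DecidableEq α] [Fintype α] (t : Finset α) (k : ℕ) (ht : t.card ≤ k) :
    (((Finset.univ : Finset α).powersetCard k).filter (fun I => t ⊆ I)).card
      = (Fintype.card α - t.card).choose (k - t.card) := by
  have hc : #(univ \ t) = Fintype.card α - #t := by
    rw [card_sdiff_of_subset (subset_univ t), card_univ]
  rw [← hc, ← Finset.card_powersetCard (k - t.card) (Finset.univ \ t)]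
  apply Finset.card_bij' (fun I _ => I \ t) (fun J _ => J ∪ t)
  · intro I hI
    simp only [mem_filter, mem_powersetCard] at hI
    obtain ⟨⟨-, hcard⟩, hsub⟩ := hI
    rw [mem_powersetCard]
    constructor
    · exact sdiff_subset_sdiff (subset_univ I) (le_refl t)
    · rw [card_sdiff_of_subset hsub, hcard]
  · intro J hJ
    rw [mem_powersetCard] at hJ
    obtain ⟨hJsub, hJcard⟩ := hJ
    have hdisj : Disjoint J t := by
      refine disjoint_left.mpr fun a haJ hat => ?_
      have := hJsub haJ
      simp only [mem_sdiff] at this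
      exact this.2 hat
    simp only [mem_filter, mem_powersetCard]
    refine ⟨⟨subset_univ _, ?_⟩, subset_union_right⟩
    rw [card_union_of_disjoint hdisj, hJcard]
    omega
  · intro I hI
    simp only [mem_filter] at hI
    exact sdiff_union_of_subset hI.2
  · intro J hJ
    rw [mem_powersetCard] at hJ
    have hdisj : Disjoint J t := by
      refine disjoint_left.mpr fun a haJ hat => ?_
      have := hJ.1 haJ
      simp only [mem_sdiff] at this
      exact this.2 hat
    exact union_sdiff_cancel_right hdisj

-- product congruence
lemma sunDvdProd {R : Type*} [CommRing R] {ι : Type*} [DecidableEq ι] (y : R) (J : Finset ι)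
    (f g : ι → R) (hfg : ∀ s ∈ J, y ∣ (f s - g s)) :
    y ∣ (∏ s ∈ J, f s - ∏ s ∈ J, g s) := by
  induction J using Finset.induction_on with
  | empty => simp
  | @insert a J ha ih =>
    rw [prod_insert ha, prod_insert ha]
    have h1 : y ∣ (f a - g a) := hfg a (mem_insert_self a J)
    have h2 : y ∣ (∏ s ∈ J, f s - ∏ s ∈ J, g s) :=
      ih fun s hs => hfg s (mem_insert_of_mem hs)
    have : f a * ∏ s ∈ J, f s - g a * ∏ s ∈ J, g s
        = f a * (∏ s ∈ J, f s - ∏ s ∈ J, g s) + (f a - g a) * ∏ s ∈ J, g s := by ring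
    rw [this]
    exact dvd_add (Dvd.dvd.mul_left h2 _) (Dvd.dvd.mul_right h1 _)

lemma sunPowExpand {R : Type*} [CommRing R] (y : R) (a : ℕ) :
    ∃ t : R, (1 + y) ^ a = 1 + (a : R) * y + y ^ 2 * t := by
  induction a with
  | zero => exact ⟨0, by simp⟩
  | succ n ih =>
    obtain ⟨t, ht⟩ := ih
    refine ⟨t + n + y * t, ?_⟩
    rw [pow_succ, ht]
    push_cast
    ring

-- collapse lemma
lemma sunCollapse {p : ℕ} (hp : p.Prime) {h : ℕ} (hh : 0 < h) {R : Type*} [CommRing R]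
    (hchar : (p : R) = 0) {ι : Type*} [Fintype ι] [DecidableEq ι]
    (hcard : Fintype.card ι = 2 * p ^ h - 2) (v : ι → R) :
    ∑ I ∈ (Finset.univ : Finset ι).powersetCard (p ^ h - 1), ∏ s ∈ I, (v s + 1)
      = ∑ I ∈ (Finset.univ : Finset ι).powersetCard (p ^ h - 1), ∏ s ∈ I, v s := by
  have hq2 : 2 ≤ p ^ h := by
    calc 2 ≤ p := hp.two_le
    _ ≤ p ^ h := Nat.le_self_pow hh.ne' p
  set k := p ^ h - 1 with hk
  -- expand each product
  have expand : ∀ I : Finset ι, ∏ s ∈ I, (v s + 1) = ∑ t ∈ I.powerset, ∏ s ∈ t, v s := by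
    intro I
    rw [Finset.prod_add]
    refine Finset.sum_congr rfl fun t ht => ?_
    rw [prod_const_one, mul_one]
  simp_rw [expand]
  -- swap sums
  have swap : ∑ I ∈ (univ : Finset ι).powersetCard k, ∑ t ∈ I.powerset, ∏ s ∈ t, v s
      = ∑ t ∈ (univ : Finset ι).powerset,
          (((univ : Finset ι).powersetCard k).filter (fun I => t ⊆ I)).card • ∏ s ∈ t, v s := by
    have inner : ∀ I ∈ (univ : Finset ι).powersetCard k,
        ∑ t ∈ I.powerset, ∏ s ∈ t, v s
          = ∑ t ∈ (univ : Finset ι).powerset, if t ⊆ I then ∏ s ∈ t, v s else 0 := by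
      intro I hI
      rw [← Finset.sum_filter]
      congr 1
      ext t
      simp [Finset.mem_powerset, Finset.subset_univ]
    rw [Finset.sum_congr rfl inner, Finset.sum_comm]
    refine Finset.sum_congr rfl fun t ht => ?_
    rw [← Finset.sum_filter, Finset.sum_const]
  rw [swap]
  -- evaluate each term
  have eval1 : ∀ t ∈ (univ : Finset ι).powerset,
      (((univ : Finset ι).powersetCard k).filter (fun I => t ⊆ I)).card • ∏ s ∈ t, v s
        = if t.card = k then ∏ s ∈ t, v s else 0 := by
    intro t ht
    by_cases hcase : t.card = k
    · rw [if_pos hcase, sunCount t k (le_of_eq hcase), hcase]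
      simp
    · rw [if_neg hcase]
      by_cases hlt : t.card < k
      · rw [sunCount t k (le_of_lt hlt), nsmul_eq_mul]
        have : ((Fintype.card ι - t.card).choose (k - t.card) : R) = 0 := by
          have hd : p ∣ (Fintype.card ι - t.card).choose (k - t.card) := by
            have e1 : Fintype.card ι - t.card = p ^ h - 1 + (k - t.card) := by
              rw [hcard]; omega
            rw [e1, ← Nat.choose_symm (by omega : k - t.card ≤ p ^ h - 1 + (k - t.card)),
              (by omega : p ^ h - 1 + (k - t.card) - (k - t.card) = p ^ h - 1)]
            exact sunA hp hh (by omega) (by omega)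
          obtain ⟨m, hm⟩ := hd
          rw [hm]
          push_cast
          rw [hchar, zero_mul]
        rw [this, zero_mul]
      · -- t.card > k : filter is empty
        have : (((univ : Finset ι).powersetCard k).filter (fun I => t ⊆ I)) = ∅ := by
          refine Finset.filter_eq_empty_iff.mpr fun I hI hsub => ?_
          rw [Finset.mem_powersetCard] at hI
          have := Finset.card_le_card hsub
          omega
        rw [this]
        simp
  rw [Finset.sum_congr rfl eval1, Finset.sum_ite, Finset.sum_const_zero, add_zero]
  congr 1
  rw [Finset.powersetCard_eq_filter]

lemma sunGeom {p : ℕ} (hp : p.Prime) {h : ℕ} (hh : 0 < h) :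
    ((X - 1 : (ZMod p)[X])) ^ (p ^ h - 1) = ∑ i ∈ range (p ^ h), (X : (ZMod p)[X]) ^ i := by
  haveI : Fact p.Prime := ⟨hp⟩
  have hq1 : 0 < p ^ h := Nat.pow_pos hp.pos
  have hXne : (X - 1 : (ZMod p)[X]) ≠ 0 := by
    intro hz
    rw [sub_eq_zero] at hz
    exact X_ne_C (1 : ZMod p) (by rwa [map_one])
  apply mul_right_cancel₀ hXne
  rw [geom_sum_mul, ← pow_succ, Nat.sub_add_cancel hq1]
  have := sub_pow_char_pow (p := p) (n := h) (X : (ZMod p)[X]) 1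
  rw [this, one_pow]

lemma sunKey {p : ℕ} (hp : p.Prime) {h : ℕ} (hh : 0 < h)
    (a : Fin (2 * p ^ h - 2) → ℕ) (r : ℕ) (hr : r < p ^ h) :
    ((((Finset.univ : Finset (Fin (2 * p ^ h - 2))).powersetCard (p ^ h - 1)).filter
        (fun I => (∑ s ∈ I, a s) % p ^ h = r)).card : ZMod p)
      = ∑ J ∈ (Finset.univ : Finset (Fin (2 * p ^ h - 2))).powersetCard (p ^ h - 1),
          ∏ s ∈ J, (a s : ZMod p) := by
  haveI : Fact p.Prime := ⟨hp⟩
  have hq2 : 2 ≤ p ^ h := by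
    calc 2 ≤ p := hp.two_le
    _ ≤ p ^ h := Nat.le_self_pow hh.ne' p
  have hq0 : 0 < p ^ h := by omega
  let ι := Fin (2 * p ^ h - 2)
  set f : (ZMod p)[X] := X ^ p ^ h - 1 with hf
  set G : (ZMod p)[X] := ∑ I ∈ (univ : Finset ι).powersetCard (p ^ h - 1),
      X ^ ((∑ s ∈ I, a s) % p ^ h) with hGdef
  set e : ZMod p := ∑ J ∈ (univ : Finset ι).powersetCard (p ^ h - 1),
      ∏ s ∈ J, (a s : ZMod p) with hedef
  set S : (ZMod p)[X] := ∑ i ∈ range (p ^ h), X ^ i with hSdef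
  set H : (ZMod p)[X] := C e * S with hHdef
  set R := AdjoinRoot f with hR
  set x : R := AdjoinRoot.root f with hxdef
  -- basic facts in R
  have hxq : x ^ p ^ h = 1 := by
    have h0 : (AdjoinRoot.mk f) f = 0 := AdjoinRoot.mk_self
    rw [hf, map_sub, map_pow, AdjoinRoot.mk_X, map_one, sub_eq_zero] at h0
    exact h0
  have hyq : (x - 1 : R) ^ p ^ h = 0 := by
    have hKX : ((X - 1 : (ZMod p)[X])) ^ p ^ h = f := by
      rw [hf, sub_pow_char_pow (p := p) (n := h) (X : (ZMod p)[X]) 1, one_pow]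
    have : (AdjoinRoot.mk f) ((X - 1 : (ZMod p)[X]) ^ p ^ h) = 0 := by
      rw [hKX]; exact AdjoinRoot.mk_self
    rwa [map_pow, map_sub, AdjoinRoot.mk_X, map_one] at this
  -- compute mk G
  have hxmod : ∀ m : ℕ, x ^ (m % p ^ h) = x ^ m := by
    intro m
    conv_rhs => rw [← Nat.div_add_mod m (p ^ h)]
    rw [pow_add, pow_mul, hxq, one_pow, one_mul]
  have hmkG : (AdjoinRoot.mk f) G = ∑ I ∈ (univ : Finset ι).powersetCard (p ^ h - 1),
      ∏ s ∈ I, x ^ a s := by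
    rw [hGdef, map_sum]
    refine Finset.sum_congr rfl fun I hI => ?_
    rw [map_pow, AdjoinRoot.mk_X, hxmod, ← Finset.prod_pow_eq_pow_sum]
  -- collapse
  have hchar : (p : R) = 0 := by
    have : ((p : ZMod p) : R) = (p : R) := map_natCast (algebraMap (ZMod p) R) p
    rw [← this, ZMod.natCast_self, map_zero]
  have hcollapse : ∑ I ∈ (univ : Finset ι).powersetCard (p ^ h - 1), ∏ s ∈ I, x ^ a s
      = ∑ J ∈ (univ : Finset ι).powersetCard (p ^ h - 1), ∏ s ∈ J, (x ^ a s - 1) := by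
    have := sunCollapse hp hh (R := R) hchar (ι := ι) (by simp [ι]) (fun s => x ^ a s - 1)
    rw [← this]
    refine Finset.sum_congr rfl fun I _ => Finset.prod_congr rfl fun s _ => by ring
  -- per-J evaluation
  have hexpand : ∀ s : ι, ∃ t : R, x ^ a s - 1 = (a s : R) * (x - 1) + (x - 1) ^ 2 * t := by
    intro s
    obtain ⟨t, ht⟩ := sunPowExpand (x - 1 : R) (a s)
    refine ⟨t, ?_⟩
    have h1 : (1 : R) + (x - 1) = x := by ring
    rw [h1] at ht
    rw [ht]; ring
  choose t ht using hexpand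
  have hperJ : ∀ J ∈ (univ : Finset ι).powersetCard (p ^ h - 1),
      ∏ s ∈ J, (x ^ a s - 1) = (∏ s ∈ J, (a s : R)) * (x - 1) ^ (p ^ h - 1) := by
    intro J hJ
    have hJcard : J.card = p ^ h - 1 := (Finset.mem_powersetCard.mp hJ).2
    have step1 : ∏ s ∈ J, (x ^ a s - 1)
        = (x - 1) ^ J.card * ∏ s ∈ J, ((a s : R) + (x - 1) * t s) := by
      rw [← Finset.prod_const, ← Finset.prod_mul_distrib]
      refine Finset.prod_congr rfl fun s _ => ?_
      rw [ht s]; ring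
    obtain ⟨w, hw⟩ := sunDvdProd (x - 1 : R) J (fun s => (a s : R) + (x - 1) * t s)
      (fun s => (a s : R)) (fun s _ => ⟨t s, by ring⟩)
    have step2 : ∏ s ∈ J, ((a s : R) + (x - 1) * t s) = ∏ s ∈ J, (a s : R) + (x - 1) * w := by
      rw [← hw]; ring
    rw [step1, step2, hJcard, mul_add, ← mul_assoc]
    have : (x - 1 : R) ^ (p ^ h - 1) * (x - 1) = 0 := by
      rw [← pow_succ, Nat.sub_add_cancel (by omega), hyq]
    rw [this, zero_mul, add_zero, mul_comm]
  -- mk H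
  have hmkH : (AdjoinRoot.mk f) H = (∑ J ∈ (univ : Finset ι).powersetCard (p ^ h - 1),
      ∏ s ∈ J, (a s : R)) * (x - 1) ^ (p ^ h - 1) := by
    rw [hHdef, map_mul, AdjoinRoot.mk_C, hSdef, ← sunGeom hp hh, map_pow, map_sub,
      AdjoinRoot.mk_X, map_one]
    congr 1
    rw [hedef, map_sum]
    refine Finset.sum_congr rfl fun J _ => ?_
    rw [map_prod]
    exact Finset.prod_congr rfl fun s _ => map_natCast _ _
  have hmkGH : (AdjoinRoot.mk f) G = (AdjoinRoot.mk f) H := by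
    rw [hmkG, hcollapse, hmkH, Finset.sum_mul]
    exact Finset.sum_congr rfl hperJ
  -- degree bounds
  have hdegS : S.degree < (p ^ h : ℕ) := by
    rw [hSdef]
    refine lt_of_le_of_lt (degree_sum_le _ _) ?_
    rw [Finset.sup_lt_iff (by exact_mod_cast WithBot.bot_lt_coe (p ^ h))]
    intro i hi
    rw [degree_X_pow]
    exact_mod_cast Finset.mem_range.mp hi
  have hdegG : G.degree < (p ^ h : ℕ) := by
    rw [hGdef]
    refine lt_of_le_of_lt (degree_sum_le _ _) ?_
    rw [Finset.sup_lt_iff (by exact_mod_cast WithBot.bot_lt_coe (p ^ h))]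
    intro I hI
    rw [degree_X_pow]
    exact_mod_cast Nat.mod_lt _ hq0
  have hdegH : H.degree < (p ^ h : ℕ) := by
    rw [hHdef, ← smul_eq_C_mul]
    exact lt_of_le_of_lt (degree_smul_le _ _) hdegS
  have hdegf : f.degree = (p ^ h : ℕ) := by
    rw [hf, ← C_1]
    exact degree_X_pow_sub_C hq0 1
  have hGH : G = H := by
    have hdvd : f ∣ G - H := (AdjoinRoot.mk_eq_mk).mp hmkGH
    have hlt : (G - H).degree < f.degree := by
      rw [hdegf]
      exact lt_of_le_of_lt (degree_sub_le _ _) (max_lt hdegG hdegH)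
    exact sub_eq_zero.mp (Polynomial.eq_zero_of_dvd_of_degree_lt hdvd hlt)
  -- coefficient extraction at r
  have hcoeffG : G.coeff r = ((((univ : Finset ι).powersetCard (p ^ h - 1)).filter
      (fun I => (∑ s ∈ I, a s) % p ^ h = r)).card : ZMod p) := by
    rw [hGdef, finset_sum_coeff]
    rw [← Finset.sum_boole]
    refine Finset.sum_congr rfl fun I _ => ?_
    rw [coeff_X_pow]
    exact if_congr eq_comm rfl rfl
  have hcoeffH : H.coeff r = e := by
    rw [hHdef, coeff_C_mul, hSdef, finset_sum_coeff]
    have : ∑ i ∈ range (p ^ h), ((X : (ZMod p)[X]) ^ i).coeff r = 1 := by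
      simp_rw [coeff_X_pow]
      rw [Finset.sum_ite_eq (range (p ^ h)) r (fun _ => (1 : ZMod p))]
      rw [if_pos (Finset.mem_range.mpr hr)]
    rw [this, mul_one]
  have hfinal : G.coeff r = e := by rw [hGH, hcoeffH]
  rw [hcoeffG] at hfinal
  exact hfinal




/-- **Corollary 3.3(ii)** (Sun): Let `p` be a prime and `h ≥ 1`.  For any integers
`c, c₁,…,c_{2p^h-2}`, the number of `I ⊆ [1,2p^h-2]` with `|I| = p^h - 1` and
`p^h ∣ ∑_{s∈I} c_s - c` is congruent modulo `p` to the coefficient of `x^{p^h-1}` in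
`∏_{s=1}^{2p^h-2} (x - c_s)`. -/
theorem sun_corollary3_3ii (p : ℕ) (hp : p.Prime) (h : ℕ) (hh : 0 < h)
    (c : ℤ) (cs : Fin (2 * p ^ h - 2) → ℤ) :
    (((Finset.univ : Finset (Fin (2 * p ^ h - 2))).powerset.filter
        (fun I => I.card = p ^ h - 1 ∧ (p ^ h : ℤ) ∣ (∑ s ∈ I, cs s) - c)).card : ℤ)
    ≡ (∏ s, (Polynomial.X - Polynomial.C (cs s))).coeff (p ^ h - 1) [ZMOD (p : ℤ)] := by
  haveI : Fact p.Prime := ⟨hp⟩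
  have hq2 : 2 ≤ p ^ h := by
    calc 2 ≤ p := hp.two_le
    _ ≤ p ^ h := Nat.le_self_pow hh.ne' p
  have hqZ : (0 : ℤ) < (p ^ h : ℕ) := by exact_mod_cast (by omega : 0 < p ^ h)
  set a : Fin (2 * p ^ h - 2) → ℕ := fun s => ((cs s) % ((p ^ h : ℕ) : ℤ)).toNat with hadef
  set r : ℕ := (c % ((p ^ h : ℕ) : ℤ)).toNat with hrdef
  have ha : ∀ s, ((a s : ℕ) : ℤ) = cs s % ((p ^ h : ℕ) : ℤ) := fun s =>
    Int.toNat_of_nonneg (Int.emod_nonneg _ hqZ.ne')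
  have hrZ : ((r : ℕ) : ℤ) = c % ((p ^ h : ℕ) : ℤ) :=
    Int.toNat_of_nonneg (Int.emod_nonneg _ hqZ.ne')
  have hr : r < p ^ h := by
    have := Int.emod_lt_of_pos c hqZ
    omega
  -- convert to ZMod p equality
  rw [← ZMod.intCast_eq_intCast_iff]
  push_cast
  -- the set equality
  have hpred : ∀ I : Finset (Fin (2 * p ^ h - 2)),
      ((p ^ h : ℤ) ∣ (∑ s ∈ I, cs s) - c) ↔ ((∑ s ∈ I, a s) % p ^ h = r) := by
    intro I
    have h1 : (p ^ h : ℤ) = ((p ^ h : ℕ) : ℤ) := by push_cast; ring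
    rw [h1, ← Int.modEq_iff_dvd, Int.ModEq]
    have h2 : (∑ s ∈ I, cs s) % ((p ^ h : ℕ) : ℤ) = ((∑ s ∈ I, a s : ℕ) : ℤ) % ((p ^ h : ℕ) : ℤ) := by
      rw [Finset.sum_int_mod]
      have hsum : ∑ s ∈ I, cs s % ((p ^ h : ℕ) : ℤ) = ((∑ s ∈ I, a s : ℕ) : ℤ) := by
        rw [Nat.cast_sum]
        exact Finset.sum_congr rfl fun s _ => (ha s).symm
      rw [hsum]
    rw [h2, ← hrZ]
    have h3 : ((∑ s ∈ I, a s : ℕ) : ℤ) % ((p ^ h : ℕ) : ℤ) = (((∑ s ∈ I, a s) % p ^ h : ℕ) : ℤ) := by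
      push_cast
      rfl
    rw [h3]
    constructor
    · intro hx; exact_mod_cast hx.symm
    · intro hx; exact_mod_cast hx.symm
  have hset : (Finset.univ : Finset (Fin (2 * p ^ h - 2))).powerset.filter
        (fun I => I.card = p ^ h - 1 ∧ (p ^ h : ℤ) ∣ (∑ s ∈ I, cs s) - c)
      = ((Finset.univ : Finset (Fin (2 * p ^ h - 2))).powersetCard (p ^ h - 1)).filter
        (fun I => (∑ s ∈ I, a s) % p ^ h = r) := by
    rw [Finset.powersetCard_eq_filter, Finset.filter_filter]
    apply Finset.filter_congr
    intro I hI
    constructor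
    · rintro ⟨h1, h2⟩; exact ⟨h1, (hpred I).mp h2⟩
    · rintro ⟨h1, h2⟩; exact ⟨h1, (hpred I).mpr h2⟩
  rw [hset, sunKey hp hh a r hr]
  -- now the RHS coefficient
  have hcast : ∀ s, ((a s : ℕ) : ZMod p) = ((cs s : ℤ) : ZMod p) := by
    intro s
    have h1 : ((a s : ℕ) : ℤ) = cs s - ((p ^ h : ℕ) : ℤ) * (cs s / ((p ^ h : ℕ) : ℤ)) := by
      rw [ha s, Int.emod_def]
    calc ((a s : ℕ) : ZMod p) = (((a s : ℕ) : ℤ) : ZMod p) := by push_cast; ring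
    _ = ((cs s : ℤ) : ZMod p) := by
        rw [h1]
        push_cast
        rw [ZMod.natCast_self]
        rw [zero_pow hh.ne']
        ring
  have hneg : (-1 : ZMod p) ^ (p ^ h - 1) = 1 := by
    rcases hp.eq_two_or_odd' with h2 | hodd
    · subst h2
      rw [CharTwo.neg_eq, one_pow]
    · have : Even (p ^ h - 1) := Nat.Odd.sub_odd (hodd.pow) odd_one
      exact this.neg_one_pow
  -- coefficient via map to ZMod p
  have hcoeff : (((∏ s, (X - C (cs s))).coeff (p ^ h - 1) : ℤ) : ZMod p)
      = ∑ J ∈ (Finset.univ : Finset (Fin (2 * p ^ h - 2))).powersetCard (p ^ h - 1),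
          ∏ s ∈ J, ((cs s : ℤ) : ZMod p) := by
    have hmap : (((∏ s, (X - C (cs s))).coeff (p ^ h - 1) : ℤ) : ZMod p)
        = ((∏ s, (X + C (-((cs s : ℤ) : ZMod p)))) : (ZMod p)[X]).coeff (p ^ h - 1) := by
      have hm : ((Polynomial.map (Int.castRingHom (ZMod p)) (∏ s, (X - C (cs s)))).coeff (p ^ h - 1))
          = (((∏ s, (X - C (cs s))).coeff (p ^ h - 1) : ℤ) : ZMod p) := by
        rw [Polynomial.coeff_map]
        rfl
      rw [← hm, Polynomial.map_prod]
      congr 1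
      refine Finset.prod_congr rfl fun s _ => ?_
      rw [Polynomial.map_sub, Polynomial.map_X, Polynomial.map_C, sub_eq_add_neg, ← map_neg]
      rfl
    rw [hmap]
    have hcardu : (Finset.univ : Finset (Fin (2 * p ^ h - 2))).card = 2 * p ^ h - 2 := by simp
    rw [Finset.prod_X_add_C_coeff _ _ (by rw [hcardu]; omega)]
    rw [hcardu, (by omega : 2 * p ^ h - 2 - (p ^ h - 1) = p ^ h - 1)]
    refine Finset.sum_congr rfl fun J hJ => ?_
    have hJc : J.card = p ^ h - 1 := (Finset.mem_powersetCard.mp hJ).2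
    have hJneg : ∏ s ∈ J, -((cs s : ℤ) : ZMod p)
        = ∏ s ∈ J, ((-1 : ZMod p) * ((cs s : ℤ) : ZMod p)) :=
      Finset.prod_congr rfl fun s _ => by ring
    rw [hJneg, Finset.prod_mul_distrib, Finset.prod_const, hJc, hneg, one_mul]
  rw [hcoeff]
  exact Finset.sum_congr rfl fun J _ => Finset.prod_congr rfl fun s _ => hcast s
end

section
/- Let q = p^h > 1 be a power of a prime p, and let c_1,...,c_{4q−2} be elements of the group (ℤ/qℤ)² = ℤ/qℤ ⊕ ℤ/qℤ. Then |{ I ⊆ {1,...,4q−2} : |I| = q and ∑_{s∈I} c_s = 0 }| ≡ |{ I ⊆ {1,...,4q−2} : |I| = 3q and ∑_{s∈I} c_s = 0 }| + 2 (mod p). -/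
open Finset AddMonoidAlgebra

private lemma chunkLucas (p : ℕ) [Fact p.Prime] : ∀ (h A B C D : ℕ), B < p^h → D < p^h →
    ((A * p^h + B).choose (C * p^h + D) : ZMod p) = (A.choose C : ZMod p) * (B.choose D : ZMod p) := by
  intro h
  induction h with
  | zero =>
    intro A B C D hB hD
    simp only [pow_zero, Nat.lt_one_iff] at hB hD
    subst hB; subst hD
    simp
  | succ h ih =>
    intro A B C D hB hD
    have hp : 0 < p := (Fact.out : p.Prime).pos
    have lucas : ∀ n k : ℕ, ((n.choose k : ZMod p)) =
        ((n % p).choose (k % p) : ZMod p) * ((n / p).choose (k / p) : ZMod p) := by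
      intro n k
      have := (Choose.choose_modEq_choose_mod_mul_choose_div (n := n) (k := k) (p := p))
      have := (ZMod.intCast_eq_intCast_iff' _ _ _).mpr this
      push_cast at this
      exact_mod_cast this
    have e1 : ∀ X Y : ℕ, (X * p ^ (h+1) + Y) % p = Y % p := by
      intro X Y
      rw [pow_succ, ← mul_assoc, mul_comm (X * p ^ h) p, Nat.mul_add_mod]
    have e2 : ∀ X Y : ℕ, (X * p ^ (h+1) + Y) / p = X * p ^ h + Y / p := by
      intro X Y
      rw [pow_succ, ← mul_assoc, mul_comm (X * p ^ h) p, Nat.mul_add_div hp]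
    rw [lucas, e1, e1, e2, e2, ih A (B / p) C (D / p) (Nat.div_lt_of_lt_mul (by rwa [mul_comm, ← pow_succ]))
      (Nat.div_lt_of_lt_mul (by rwa [mul_comm, ← pow_succ])), lucas B D]
    ring

private lemma card_supersets {α : Type*} [DecidableEq α] (s I : Finset α) (hI : I ⊆ s) (k : ℕ)
    (hk : I.card ≤ k) :
    ((s.powersetCard k).filter (fun S => I ⊆ S)).card = (s.card - I.card).choose (k - I.card) := by
  rw [← Finset.card_sdiff_of_subset hI, ← Finset.card_powersetCard]
  apply Finset.card_bij' (fun S _ => S \ I) (fun T _ => T ∪ I)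
  · intro S hS
    simp only [mem_filter, mem_powersetCard] at hS
    simp only [mem_powersetCard]
    exact ⟨sdiff_subset_sdiff hS.1.1 (le_refl I), by rw [card_sdiff_of_subset hS.2, hS.1.2]⟩
  · intro T hT
    simp only [mem_powersetCard] at hT
    have hdis : Disjoint T I := disjoint_of_subset_left hT.1 (sdiff_disjoint)
    simp only [mem_filter, mem_powersetCard]
    refine ⟨⟨?_, ?_⟩, subset_union_right⟩
    · exact union_subset (hT.1.trans (sdiff_subset)) hI
    · rw [card_union_of_disjoint hdis, hT.2]
      omega
  · intro S hS
    simp only [mem_filter] at hS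
    exact sdiff_union_of_subset hS.2
  · intro T hT
    simp only [mem_powersetCard] at hT
    have hdis : Disjoint T I := disjoint_of_subset_left hT.1 (sdiff_disjoint)
    rw [union_sdiff_right, sdiff_eq_self_of_disjoint hdis]

private lemma prod_vanish {R : Type*} [CommRing R] (u v : R) (q : ℕ) (hu : u ^ q = 0) (hv : v ^ q = 0)
    {ι : Type*} [DecidableEq ι] (s : Finset ι) (f r r' : ι → R)
    (hf : ∀ i ∈ s, f i = u * r i + v * r' i)
    (hcard : 2 * q - 1 ≤ s.card) (hq : 0 < q) : ∏ i ∈ s, f i = 0 := by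
  rw [Finset.prod_congr rfl hf, Finset.prod_add]
  apply Finset.sum_eq_zero
  intro t ht
  rw [Finset.mem_powerset] at ht
  rw [Finset.prod_mul_distrib, Finset.prod_mul_distrib, Finset.prod_const, Finset.prod_const]
  rcases le_or_gt q t.card with hle | hlt
  · have : u ^ t.card = 0 := by
      rw [show t.card = q + (t.card - q) by omega, pow_add, hu, zero_mul]
    rw [this]; ring
  · have hge : q ≤ (s \ t).card := by
      rw [Finset.card_sdiff_of_subset ht]
      have := Finset.card_le_card ht
      omega
    have : v ^ (s \ t).card = 0 := by
      rw [show (s \ t).card = q + ((s \ t).card - q) by omega, pow_add, hv, zero_mul]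
    rw [this]; ring

private lemma prod_single_eq {k G ι : Type*} [CommSemiring k] [AddCommMonoid G] (s : Finset ι)
    (c : ι → G) :
    ∏ i ∈ s, (AddMonoidAlgebra.single (c i) 1 : AddMonoidAlgebra k G)
      = AddMonoidAlgebra.single (∑ i ∈ s, c i) 1 := by
  classical
  induction s using Finset.cons_induction with
  | empty => simp [AddMonoidAlgebra.one_def]
  | cons a s ha ih =>
    rw [Finset.prod_cons, Finset.sum_cons, ih, AddMonoidAlgebra.single_mul_single, one_mul]

private lemma expansion {R ι : Type*} [CommRing R] [Fintype ι] [DecidableEq ι] (g : ι → R) (k : ℕ) :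
    ∑ S ∈ Finset.powersetCard k (univ : Finset ι), ∏ i ∈ S, g i
      = ∑ I ∈ (univ : Finset ι).powerset,
          (((Finset.powersetCard k (univ : Finset ι)).filter (fun S => I ⊆ S)).card)
            • ∏ i ∈ I, (g i - 1) := by
  have h1 : ∀ S : Finset ι, ∏ i ∈ S, g i
      = ∑ I ∈ univ.powerset, if I ⊆ S then ∏ i ∈ I, (g i - 1) else 0 := by
    intro S
    have e : S.powerset = univ.powerset.filter (fun I => I ⊆ S) := by
      ext I
      simp [Finset.mem_powerset, Finset.subset_univ]
    calc ∏ i ∈ S, g i = ∏ i ∈ S, ((g i - 1) + 1) := by simp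
      _ = ∑ I ∈ S.powerset, (∏ i ∈ I, (g i - 1)) * ∏ i ∈ S \ I, 1 := Finset.prod_add _ _ _
      _ = ∑ I ∈ S.powerset, ∏ i ∈ I, (g i - 1) := by simp
      _ = _ := by rw [e, Finset.sum_filter]
  calc ∑ S ∈ Finset.powersetCard k (univ : Finset ι), ∏ i ∈ S, g i
      = ∑ S ∈ Finset.powersetCard k (univ : Finset ι), ∑ I ∈ univ.powerset,
          if I ⊆ S then ∏ i ∈ I, (g i - 1) else 0 := Finset.sum_congr rfl (fun S _ => h1 S)
    _ = ∑ I ∈ univ.powerset, ∑ S ∈ Finset.powersetCard k (univ : Finset ι),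
          if I ⊆ S then ∏ i ∈ I, (g i - 1) else 0 := Finset.sum_comm
    _ = _ := by
        apply Finset.sum_congr rfl
        intro I _
        rw [← Finset.sum_filter, Finset.sum_const]

section
variable (p q : ℕ) [Fact p.Prime]

private lemma charP_R : CharP (AddMonoidAlgebra (ZMod p) (ZMod q × ZMod q)) p := by
  apply charP_of_injective_algebraMap (R := ZMod p)
  rw [AddMonoidAlgebra.coe_algebraMap]
  intro a b hab
  simpa [AddMonoidAlgebra.coeff_single] using congrArg (fun f => f.coeff (0 : ZMod q × ZMod q)) hab

private lemma upow (h : ℕ) (hq : q = p ^ h) (x : ZMod q × ZMod q) :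
    ((AddMonoidAlgebra.single x 1 : AddMonoidAlgebra (ZMod p) (ZMod q × ZMod q)) - 1) ^ q = 0 := by
  subst hq
  haveI := charP_R p (p ^ h)
  rw [sub_pow_char_pow, AddMonoidAlgebra.single_pow, one_pow]
  have : p ^ h • x = 0 := by
    have : ((p ^ h : ℕ) : ZMod (p ^ h)) = 0 := ZMod.natCast_self _
    push_cast at this
    ext <;> simp [nsmul_eq_mul, this]
  rw [this, ← AddMonoidAlgebra.one_def]
  simp

private lemma decomp (h : ℕ) (hq : q = p ^ h) (x : ZMod q × ZMod q) :
    ∃ r s : AddMonoidAlgebra (ZMod p) (ZMod q × ZMod q),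
      (AddMonoidAlgebra.single x 1 : AddMonoidAlgebra (ZMod p) (ZMod q × ZMod q)) - 1
        = ((AddMonoidAlgebra.single ((1 : ZMod q), (0 : ZMod q)) 1 : AddMonoidAlgebra (ZMod p) (ZMod q × ZMod q)) - 1) * r
        + ((AddMonoidAlgebra.single ((0 : ZMod q), (1 : ZMod q)) 1 : AddMonoidAlgebra (ZMod p) (ZMod q × ZMod q)) - 1) * s := by
  haveI : NeZero q := ⟨hq ▸ (pow_pos (Fact.out : p.Prime).pos h).ne'⟩
  obtain ⟨a, b⟩ := x
  set U : AddMonoidAlgebra (ZMod p) (ZMod q × ZMod q) := AddMonoidAlgebra.single ((1 : ZMod q), (0 : ZMod q)) 1 with hU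
  set V : AddMonoidAlgebra (ZMod p) (ZMod q × ZMod q) := AddMonoidAlgebra.single ((0 : ZMod q), (1 : ZMod q)) 1 with hV
  have ha : AddMonoidAlgebra.single ((a : ZMod q), (0 : ZMod q)) (1 : ZMod p) = U ^ a.val := by
    rw [hU, AddMonoidAlgebra.single_pow, one_pow, Prod.smul_mk, smul_zero]
    congr 1
    simp [nsmul_eq_mul, ZMod.natCast_val, ZMod.cast_id]
  have hb : AddMonoidAlgebra.single ((0 : ZMod q), (b : ZMod q)) (1 : ZMod p) = V ^ b.val := by
    rw [hV, AddMonoidAlgebra.single_pow, one_pow, Prod.smul_mk, smul_zero]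
    congr 1
    simp [nsmul_eq_mul, ZMod.natCast_val, ZMod.cast_id]
  have key : AddMonoidAlgebra.single ((a : ZMod q), (b : ZMod q)) (1 : ZMod p)
      = U ^ a.val * V ^ b.val := by
    rw [← ha, ← hb, AddMonoidAlgebra.single_mul_single, one_mul, Prod.mk_add_mk, add_zero, zero_add]
  refine ⟨(∑ i ∈ Finset.range a.val, U ^ i) * V ^ b.val, ∑ i ∈ Finset.range b.val, V ^ i, ?_⟩
  rw [key]
  have e1 : U ^ a.val - 1 = (U - 1) * ∑ i ∈ Finset.range a.val, U ^ i := by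
    rw [mul_comm, geom_sum_mul]
  have e2 : V ^ b.val - 1 = (V - 1) * ∑ i ∈ Finset.range b.val, V ^ i := by
    rw [mul_comm, geom_sum_mul]
  calc U ^ a.val * V ^ b.val - 1
      = (U ^ a.val - 1) * V ^ b.val + (V ^ b.val - 1) := by ring
    _ = (U - 1) * ((∑ i ∈ Finset.range a.val, U ^ i) * V ^ b.val)
        + (V - 1) * ∑ i ∈ Finset.range b.val, V ^ i := by rw [e1, e2]; ring

noncomputable def phi : AddMonoidAlgebra (ZMod p) (ZMod q × ZMod q) →+ ZMod p :=
  (Finsupp.applyAddHom (0 : ZMod q × ZMod q)).comp AddMonoidAlgebra.coeffAddEquiv.toAddMonoidHom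

lemma phi_single (a : ZMod q × ZMod q) (b : ZMod p) :
    phi p q (AddMonoidAlgebra.single a b) = if a = 0 then b else 0 := by
  classical
  show (AddMonoidAlgebra.single a b).coeff 0 = _
  rw [AddMonoidAlgebra.coeff_single, Finsupp.single_apply]

lemma phi_one : phi p q 1 = 1 := by
  rw [AddMonoidAlgebra.one_def, phi_single]
  simp

end

/-- Let `q = p^h > 1` be a prime power and `c₁,…,c_{4q-2} ∈ (ℤ/qℤ)²`.  Then the number of
`I ⊆ [1,4q-2]` with `|I| = q` and `∑_{s∈I} c_s = 0` is congruent modulo `p` to the number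
of `I ⊆ [1,4q-2]` with `|I| = 3q` and `∑_{s∈I} c_s = 0`, plus `2`. -/
theorem kemnitz_type_congruence (p : ℕ) (hp : p.Prime) (h : ℕ) (hh : 0 < h)
    (q : ℕ) (hq : q = p ^ h)
    (c : Fin (4 * q - 2) → ZMod q × ZMod q) :
    (((Finset.univ : Finset (Fin (4 * q - 2))).powerset.filter
        (fun I => I.card = q ∧ ∑ s ∈ I, c s = 0)).card : ℤ)
    ≡ (((Finset.univ : Finset (Fin (4 * q - 2))).powerset.filter
        (fun I => I.card = 3 * q ∧ ∑ s ∈ I, c s = 0)).card : ℤ) + 2 [ZMOD (p : ℤ)] := by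
  haveI : Fact p.Prime := ⟨hp⟩
  classical
  have hq2 : 2 ≤ q := by
    have h1 : p ≤ p ^ h := Nat.le_self_pow (by omega) p
    have h2 := hp.two_le
    omega
  have chunk : ∀ A B C D : ℕ, B < q → D < q →
      ((A * q + B).choose (C * q + D) : ZMod p)
        = (A.choose C : ZMod p) * (B.choose D : ZMod p) := by
    intro A B C D hB hD
    rw [hq] at hB hD ⊢
    exact chunkLucas p h A B C D hB hD
  set g : Fin (4 * q - 2) → AddMonoidAlgebra (ZMod p) (ZMod q × ZMod q) :=
    fun i => AddMonoidAlgebra.single (c i) 1 with hg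
  set CNT : Finset (Fin (4 * q - 2)) → ℕ → ℕ := fun I k =>
    ((Finset.powersetCard k (univ : Finset (Fin (4 * q - 2)))).filter (fun S => I ⊆ S)).card
    with hCNTdef
  set N : ℕ → ℕ := fun k =>
    ((univ : Finset (Fin (4 * q - 2))).powerset.filter
      (fun I => I.card = k ∧ ∑ s ∈ I, c s = 0)).card with hNdef
  -- φ applied to A_k gives N k
  have hNA : ∀ k : ℕ, (N k : ZMod p)
      = phi p q (∑ S ∈ Finset.powersetCard k (univ : Finset (Fin (4 * q - 2))),
          ∏ i ∈ S, g i) := by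
    intro k
    rw [map_sum]
    have hterm : ∀ S : Finset (Fin (4 * q - 2)), phi p q (∏ i ∈ S, g i)
        = if ∑ s ∈ S, c s = 0 then 1 else 0 := by
      intro S
      rw [show ∏ i ∈ S, g i = AddMonoidAlgebra.single (∑ i ∈ S, c i) 1 from prod_single_eq S c,
        phi_single]
    rw [Finset.sum_congr rfl fun S _ => hterm S, Finset.sum_boole]
    congr 1
    rw [hNdef]
    simp only []
    rw [Finset.powersetCard_eq_filter, Finset.filter_filter]
  -- expansion
  have hAk : ∀ k : ℕ,
      phi p q (∑ S ∈ Finset.powersetCard k (univ : Finset (Fin (4 * q - 2))), ∏ i ∈ S, g i)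
      = ∑ I ∈ (univ : Finset (Fin (4 * q - 2))).powerset,
          (CNT I k : ZMod p) * phi p q (∏ i ∈ I, (g i - 1)) := by
    intro k
    rw [expansion g k, map_sum]
    exact Finset.sum_congr rfl fun I _ => by rw [map_nsmul, nsmul_eq_mul]
  -- decomposition of the generators
  have hdec := fun i : Fin (4 * q - 2) => decomp p q h hq (c i)
  choose r s hrs using hdec
  set u := (AddMonoidAlgebra.single ((1 : ZMod q), (0 : ZMod q)) 1 :
    AddMonoidAlgebra (ZMod p) (ZMod q × ZMod q)) - 1 with hu_def
  set v := (AddMonoidAlgebra.single ((0 : ZMod q), (1 : ZMod q)) 1 :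
    AddMonoidAlgebra (ZMod p) (ZMod q × ZMod q)) - 1 with hv_def
  have hu : u ^ q = 0 := upow p q h hq _
  have hv : v ^ q = 0 := upow p q h hq _
  have hw0 : ∀ I : Finset (Fin (4 * q - 2)), 2 * q - 1 ≤ I.card →
      ∏ i ∈ I, (g i - 1) = 0 := by
    intro I hI
    exact prod_vanish u v q hu hv I _ r s (fun i _ => hrs i) hI (by omega)
  -- counting supersets
  have hcard_univ : (univ : Finset (Fin (4 * q - 2))).card = 4 * q - 2 := by simp
  have hCNT : ∀ (I : Finset (Fin (4 * q - 2))) (k : ℕ), I.card ≤ k →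
      CNT I k = (4 * q - 2 - I.card).choose (k - I.card) := by
    intro I k hk
    rw [hCNTdef]
    simp only []
    rw [card_supersets univ I (Finset.subset_univ I) k hk, hcard_univ]
  have hCNT0 : ∀ (I : Finset (Fin (4 * q - 2))) (k : ℕ), k < I.card → CNT I k = 0 := by
    intro I k hk
    rw [hCNTdef]
    simp only []
    rw [Finset.card_eq_zero, Finset.filter_eq_empty_iff]
    intro S hS hIS
    rw [Finset.mem_powersetCard] at hS
    have := Finset.card_le_card hIS
    omega
  -- the key congruence
  have key : (N q : ZMod p) - (N (3 * q) : ZMod p) = 2 := by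
    rw [hNA, hNA, hAk, hAk, ← Finset.sum_sub_distrib]
    rw [Finset.sum_eq_single_of_mem ∅ (Finset.mem_powerset.mpr (Finset.empty_subset _)) ?side]
    case side =>
      intro I _ hne
      have hm1 : 1 ≤ I.card := Finset.card_pos.mpr (Finset.nonempty_iff_ne_empty.mpr hne)
      rcases le_or_gt (2 * q - 1) I.card with hbig | hsmall
      · rw [hw0 I hbig]
        simp
      · have hcnt_eq : (CNT I q : ZMod p) = (CNT I (3 * q) : ZMod p) := by
          have hm2 : I.card ≤ 2 * q - 2 := by omega
          have hRHS : (CNT I (3 * q) : ZMod p)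
              = ((4 * q - 2 - I.card).choose (3 * q - I.card) : ZMod p) := by
            rw [hCNT I (3 * q) (by omega)]
          rcases le_or_gt I.card q with hmq | hqm
          · rw [hCNT I q hmq, hRHS]
            rcases Nat.lt_or_ge I.card (q - 1) with hc | hc
            · -- I.card ≤ q - 2
              have e1 := chunk 3 (q - 2 - I.card) 0 (q - I.card) (by omega) (by omega)
              rw [show 3 * q + (q - 2 - I.card) = 4 * q - 2 - I.card by omega,
                show 0 * q + (q - I.card) = q - I.card by omega] at e1
              have e2 := chunk 3 (q - 2 - I.card) 2 (q - I.card) (by omega) (by omega)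
              rw [show 3 * q + (q - 2 - I.card) = 4 * q - 2 - I.card by omega,
                show 2 * q + (q - I.card) = 3 * q - I.card by omega] at e2
              rw [e1, e2, Nat.choose_eq_zero_of_lt (show q - 2 - I.card < q - I.card by omega)]
              simp
            · rcases Nat.lt_or_ge I.card q with hc2 | hc2
              · -- I.card = q - 1
                have e1 := chunk 2 (q - 1) 0 1 (by omega) (by omega)
                rw [show 2 * q + (q - 1) = 4 * q - 2 - I.card by omega,
                  show 0 * q + 1 = q - I.card by omega] at e1
                have e2 := chunk 2 (q - 1) 2 1 (by omega) (by omega)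
                rw [show 2 * q + (q - 1) = 4 * q - 2 - I.card by omega,
                  show 2 * q + 1 = 3 * q - I.card by omega] at e2
                rw [e1, e2]
                norm_num
              · -- I.card = q
                have e2 := chunk 2 (q - 2) 2 0 (by omega) (by omega)
                rw [show 2 * q + (q - 2) = 4 * q - 2 - I.card by omega,
                  show 2 * q + 0 = 3 * q - I.card by omega] at e2
                rw [show q - I.card = 0 by omega, e2, Nat.choose_zero_right]
                norm_num
          · -- q < I.card
            rw [hCNT0 I q hqm, hRHS]
            have e2 := chunk 2 (2 * q - 2 - I.card) 1 (2 * q - I.card) (by omega) (by omega)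
            rw [show 2 * q + (2 * q - 2 - I.card) = 4 * q - 2 - I.card by omega,
              show 1 * q + (2 * q - I.card) = 3 * q - I.card by omega] at e2
            rw [e2,
              Nat.choose_eq_zero_of_lt (show 2 * q - 2 - I.card < 2 * q - I.card by omega)]
            simp
        rw [hcnt_eq]
        ring
    -- the empty-set term
    rw [Finset.prod_empty, phi_one]
    have hc1 : (CNT ∅ q : ZMod p) = 3 := by
      rw [hCNT ∅ q (by simp)]
      simp only [Finset.card_empty, Nat.sub_zero]
      have e1 := chunk 3 (q - 2) 1 0 (by omega) (by omega)
      rw [show 3 * q + (q - 2) = 4 * q - 2 by omega, show 1 * q + 0 = q by omega] at e1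
      rw [e1]
      norm_num
    have hc2 : (CNT ∅ (3 * q) : ZMod p) = 1 := by
      rw [hCNT ∅ (3 * q) (by simp)]
      simp only [Finset.card_empty, Nat.sub_zero]
      have e1 := chunk 3 (q - 2) 3 0 (by omega) (by omega)
      rw [show 3 * q + (q - 2) = 4 * q - 2 by omega, show 3 * q + 0 = 3 * q by omega] at e1
      rw [e1]
      norm_num
    rw [hc1, hc2]
    norm_num
  -- conclude
  have final : (N q : ZMod p) = (N (3 * q) : ZMod p) + 2 := by
    rw [← key]; ring
  refine (ZMod.intCast_eq_intCast_iff _ _ _).mp ?_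
  push_cast
  push_cast at final
  exact final
end

section
/- Let A = {a_s(n_s)}_{s=1}^k be a finite system of residue classes, set N_A = lcm(n_1,...,n_k), and for z ∈ ℤ set I_z = {1 ≤ s ≤ k : z ≡ a_s (mod n_s)}. Let m_1,...,m_k ∈ ℤ, let F be a field containing an element ζ of multiplicative order N_A, and let f(x_1,...,x_k) be a polynomial over F with deg f ≤ m(A). For θ ∈ [0,1) define ψ(θ) = ∑ (−1)^{|I|} f([[1∈I]],...,[[k∈I]]) ζ^{N_A ∑_{s∈I} a_s m_s/n_s}, the sum over all I ⊆ {1,...,k} with fractional part {∑_{s∈I} m_s/n_s} = θ (note each exponent N_A ∑_{s∈I} a_s m_s/n_s is an integer). If for every z ∈ ℤ the coefficient of the monomial ∏_{s∈I_z} x_s in f is zero, then ψ(θ) = 0 for all θ ∈ [0,1). -/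
open scoped Classical

private lemma zpow_finset_sum' {F : Type*} [Field F] {ζ : F} (hζ : ζ ≠ 0)
    {α : Type*} (T : Finset α) (g : α → ℤ) :
    ζ ^ (∑ s ∈ T, g s) = ∏ s ∈ T, ζ ^ g s := by
  induction T using Finset.cons_induction with
  | empty => simp
  | cons a T ha ih => rw [Finset.sum_cons, Finset.prod_cons, zpow_add₀ hζ, ih]

private lemma sun_aux {k : ℕ} {F : Type*} [Field F]
    (f : MvPolynomial (Fin k) F) (w : Fin k → F) (T : Finset (Fin k))
    (hdeg : f.totalDegree ≤ T.card)
    (hcoeff : MvPolynomial.coeff (∑ s ∈ T, Finsupp.single s 1) f = 0)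
    (hw : ∀ s ∈ T, w s = 1) :
    ∑ I ∈ (Finset.univ : Finset (Fin k)).powerset,
      (-1 : F) ^ I.card * MvPolynomial.eval (fun s => if s ∈ I then (1 : F) else 0) f *
        ∏ s ∈ I, w s = 0 := by
  classical
  have heval : ∀ I : Finset (Fin k),
      MvPolynomial.eval (fun s => if s ∈ I then (1 : F) else 0) f =
        ∑ d ∈ f.support, MvPolynomial.coeff d f * (if d.support ⊆ I then (1:F) else 0) := by
    intro I
    rw [MvPolynomial.eval_eq]
    refine Finset.sum_congr rfl fun d _ => ?_
    congr 1
    by_cases hsub : d.support ⊆ I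
    · rw [if_pos hsub]
      refine Finset.prod_eq_one fun i hi => ?_
      rw [if_pos (hsub hi), one_pow]
    · rw [if_neg hsub]
      obtain ⟨i, hi, hiI⟩ := Finset.not_subset.mp hsub
      refine Finset.prod_eq_zero hi ?_
      rw [if_neg hiI, zero_pow (Finsupp.mem_support_iff.mp hi)]
  have step1 : ∀ I : Finset (Fin k),
      (-1 : F) ^ I.card * MvPolynomial.eval (fun s => if s ∈ I then (1 : F) else 0) f *
        ∏ s ∈ I, w s
      = ∑ d ∈ f.support, MvPolynomial.coeff d f *
          ((∏ s ∈ I, -w s) * ∏ s ∈ Finset.univ \ I, (if s ∈ d.support then (0:F) else 1)) := by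
    intro I
    rw [heval I, mul_comm ((-1:F)^I.card) _, Finset.sum_mul, Finset.sum_mul]
    refine Finset.sum_congr rfl fun d _ => ?_
    have h1 : ∏ s ∈ I, (-w s) = (-1:F)^I.card * ∏ s ∈ I, w s := by
      calc ∏ s ∈ I, (-w s) = ∏ s ∈ I, ((-1) * w s) := by
            refine Finset.prod_congr rfl fun s _ => ?_; ring
      _ = (∏ _s ∈ I, (-1:F)) * ∏ s ∈ I, w s := Finset.prod_mul_distrib
      _ = (-1:F)^I.card * ∏ s ∈ I, w s := by rw [Finset.prod_const]
    have h2 : (∏ s ∈ Finset.univ \ I, (if s ∈ d.support then (0:F) else 1))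
        = (if d.support ⊆ I then (1:F) else 0) := by
      by_cases h : d.support ⊆ I
      · rw [if_pos h]
        refine Finset.prod_eq_one fun s hs => ?_
        rw [if_neg fun hd => (Finset.mem_sdiff.mp hs).2 (h hd)]
      · rw [if_neg h]
        obtain ⟨s, hsd, hsI⟩ := Finset.not_subset.mp h
        exact Finset.prod_eq_zero (Finset.mem_sdiff.mpr ⟨Finset.mem_univ s, hsI⟩) (if_pos hsd)
    rw [h1, h2]; ring
  rw [Finset.sum_congr rfl fun I _ => step1 I, Finset.sum_comm]
  refine Finset.sum_eq_zero fun d hd => ?_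
  rw [← Finset.mul_sum]
  have hpa := Finset.prod_add (fun s => -w s)
      (fun s => if s ∈ d.support then (0:F) else 1) (Finset.univ : Finset (Fin k))
  rw [← hpa]
  by_cases hTd : T ⊆ d.support
  · have hcard1 : d.support.card ≤ d.sum fun _ e => e := by
      rw [Finsupp.sum, Finset.card_eq_sum_ones]
      exact Finset.sum_le_sum fun a ha =>
        Nat.one_le_iff_ne_zero.mpr (Finsupp.mem_support_iff.mp ha)
    have hcard2 : (d.sum fun _ e => e) ≤ f.totalDegree := MvPolynomial.le_totalDegree hd
    have hcard3 : T.card ≤ d.support.card := Finset.card_le_card hTd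
    have hTeq : T = d.support := Finset.eq_of_subset_of_card_le hTd (by omega)
    have hsum_eq : ∑ _a ∈ d.support, 1 = ∑ a ∈ d.support, d a := by
      have : (d.sum fun _ e => e) = ∑ a ∈ d.support, d a := rfl
      rw [← Finset.card_eq_sum_ones]
      omega
    have hone : ∀ a ∈ d.support, (1:ℕ) = d a :=
      (Finset.sum_eq_sum_iff_of_le fun a ha =>
        Nat.one_le_iff_ne_zero.mpr (Finsupp.mem_support_iff.mp ha)).mp hsum_eq
    have hdeq : d = ∑ s ∈ T, Finsupp.single s 1 := by
      ext t
      rw [Finsupp.finset_sum_apply]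
      simp only [Finsupp.single_apply]
      rw [Finset.sum_ite_eq' T t (fun _ => 1)]
      by_cases ht : t ∈ T
      · rw [if_pos ht]
        exact (hone t (hTeq ▸ ht)).symm
      · rw [if_neg ht]
        exact Finsupp.notMem_support_iff.mp (fun h => ht (hTeq ▸ h))
    rw [hdeq, hcoeff, zero_mul]
  · obtain ⟨s0, hs0T, hs0d⟩ := Finset.not_subset.mp hTd
    refine mul_eq_zero_of_right _ (Finset.prod_eq_zero (Finset.mem_univ s0) ?_)
    rw [hw s0 hs0T, if_neg hs0d]; ring

/-- **Lemma 4.1, first direction** (Sun): Let `A = {a_s(n_s)}_{s=1}^k`, `N_A = lcm(n₁,…,n_k)`,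
`I_z = {s : z ≡ a_s (mod n_s)}`, let `m₁,…,m_k ∈ ℤ`, let `F` be a field containing an
element `ζ` of multiplicative order `N_A`, and let `f` be a polynomial over `F` with
`deg f ≤ m(A)`.  For `θ ∈ [0,1)` let
`ψ(θ) = ∑_{I ⊆ [1,k], {∑_{s∈I} m_s/n_s} = θ} (-1)^{|I|} f([[1∈I]],…,[[k∈I]]) ζ^{N_A ∑_{s∈I} a_s m_s/n_s}`.
If the coefficient of `∏_{s∈I_z} x_s` in `f` vanishes for every `z ∈ ℤ`, then `ψ(θ) = 0`
for all `θ ∈ [0,1)`. -/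
theorem sun_lemma4_1_forward (k : ℕ) (a : Fin k → ℤ) (n : Fin k → ℕ) (hn : ∀ s, 0 < n s)
    (N : ℕ) (hN : N = Finset.univ.lcm n)
    (m : Fin k → ℤ)
    (F : Type*) [Field F] (ζ : F) (hζ : orderOf ζ = N)
    (f : MvPolynomial (Fin k) F)
    (hdeg : ∀ z : ℤ, f.totalDegree ≤
      (Finset.univ.filter (fun s : Fin k => (n s : ℤ) ∣ z - a s)).card)
    (hcoeff : ∀ z : ℤ, MvPolynomial.coeff
      (∑ s ∈ Finset.univ.filter (fun s : Fin k => (n s : ℤ) ∣ z - a s),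
        Finsupp.single s 1) f = 0) :
    ∀ θ : ℝ, 0 ≤ θ → θ < 1 →
      (∑ I ∈ (Finset.univ : Finset (Fin k)).powerset.filter
          (fun I => Int.fract (∑ s ∈ I, (m s : ℝ) / (n s : ℝ)) = θ),
        (-1 : F) ^ I.card *
          MvPolynomial.eval (fun s => if s ∈ I then (1 : F) else 0) f *
          ζ ^ (∑ s ∈ I, a s * m s * ((N / n s : ℕ) : ℤ))) = 0 := by
  intro θ hθ0 hθ1
  classical
  have hdvd : ∀ s, n s ∣ N := fun s => hN ▸ Finset.dvd_lcm (Finset.mem_univ s)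
  have hN0 : N ≠ 0 := by
    rw [hN]
    intro h
    obtain ⟨s, -, hs⟩ := Finset.lcm_eq_zero_iff.mp h
    exact (hn s).ne' hs
  have hζN : ζ ^ N = 1 := hζ ▸ pow_orderOf_eq_one ζ
  have hζ0 : ζ ≠ 0 := by
    intro h
    rw [h, zero_pow hN0] at hζN
    exact zero_ne_one hζN
  set u : Fˣ := Units.mk0 ζ hζ0 with hu
  have hordu : orderOf u = N := by rw [← orderOf_units]; exact hζ
  have hZ1 : ∀ t : ℤ, ζ ^ t = 1 ↔ ((N : ℕ) : ℤ) ∣ t := by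
    intro t
    have h1 : ((N : ℕ) : ℤ) ∣ t ↔ u ^ t = 1 := by
      rw [← hordu]; exact orderOf_dvd_iff_zpow_eq_one
    rw [show ζ ^ t = ((u ^ t : Fˣ) : F) from (Units.val_zpow_eq_zpow_val u t).symm,
        Units.val_eq_one]
    exact h1.symm
  have hgeom : ∀ t : ℤ, ∑ j ∈ Finset.range N, ζ ^ ((j : ℤ) * t)
      = if ((N : ℕ) : ℤ) ∣ t then (N : F) else 0 := by
    intro t
    have hv : ∀ j : ℕ, ζ ^ ((j : ℤ) * t) = (ζ ^ t) ^ j := by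
      intro j
      rw [mul_comm, zpow_mul, zpow_natCast]
    simp_rw [hv]
    by_cases h : ((N : ℕ) : ℤ) ∣ t
    · rw [if_pos h, (hZ1 t).mpr h]
      simp
    · rw [if_neg h]
      have hv1 : ζ ^ t ≠ 1 := fun hh => h ((hZ1 t).mp hh)
      rw [geom_sum_eq hv1]
      have hN1 : (ζ ^ t) ^ N = 1 := by
        calc (ζ ^ t) ^ N = ζ ^ (t * ((N : ℕ) : ℤ)) := by rw [zpow_mul, zpow_natCast]
        _ = 1 := (hZ1 _).mpr ⟨t, mul_comm t _⟩
      rw [hN1, sub_self, zero_div]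
  have hNF : (N : F) ≠ 0 := by
    intro hNF0
    set p := ringChar F with hp
    haveI : CharP F p := ringChar.charP F
    have hpdvd : p ∣ N := (CharP.cast_eq_zero_iff F p N).mp hNF0
    have hp0 : p ≠ 0 := by
      intro h
      rw [h] at hpdvd
      exact hN0 (zero_dvd_iff.mp hpdvd)
    have hpp : p.Prime := (CharP.char_is_prime_or_zero F p).resolve_right hp0
    obtain ⟨t, ht⟩ := hpdvd
    have ht0 : t ≠ 0 := by
      intro h
      rw [h, mul_zero] at ht
      exact hN0 ht
    have hfrob : ζ ^ t = 1 := by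
      have h1 : (ζ ^ t) ^ p = 1 := by
        rw [← pow_mul, mul_comm, ← ht, hζN]
      haveI : Fact p.Prime := ⟨hpp⟩
      apply frobenius_inj F p
      rw [frobenius_def, frobenius_def, h1, one_pow]
    have hdvdN : N ∣ t := hζ ▸ orderOf_dvd_of_pow_eq_one hfrob
    have hle := Nat.le_of_dvd (Nat.pos_of_ne_zero ht0) hdvdN
    have h2 : 2 ≤ p := hpp.two_le
    nlinarith [ht, Nat.pos_of_ne_zero ht0]
  set c : Finset (Fin k) → ℤ := fun I => ∑ s ∈ I, m s * ((N / n s : ℕ) : ℤ) with hc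
  have hfrac : ∀ I : Finset (Fin k),
      (∑ s ∈ I, (m s : ℝ) / (n s : ℝ)) = ((c I : ℤ) : ℝ) / (N : ℝ) := by
    intro I
    have hcast : ((c I : ℤ) : ℝ) = ∑ s ∈ I, (m s : ℝ) * ((N / n s : ℕ) : ℝ) := by
      simp only [hc, Int.cast_sum, Int.cast_mul, Int.cast_natCast]
    rw [hcast, Finset.sum_div]
    refine Finset.sum_congr rfl fun s _ => ?_
    have hns : (n s : ℝ) ≠ 0 := Nat.cast_ne_zero.mpr (hn s).ne'
    have hNr : ((N : ℕ) : ℝ) ≠ 0 := Nat.cast_ne_zero.mpr hN0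
    rw [div_eq_div_iff hns hNr]
    have hcancel : ((N / n s : ℕ) : ℝ) * (n s : ℝ) = (N : ℝ) := by
      exact_mod_cast congrArg (Nat.cast : ℕ → ℝ) (Nat.div_mul_cancel (hdvd s))
    rw [← hcancel]; ring
  obtain hP | ⟨I₀, hI₀⟩ := ((Finset.univ : Finset (Fin k)).powerset.filter
      (fun I => Int.fract (∑ s ∈ I, (m s : ℝ) / (n s : ℝ)) = θ)).eq_empty_or_nonempty
  · rw [hP, Finset.sum_empty]
  have hI₀f : Int.fract (∑ s ∈ I₀, (m s : ℝ) / (n s : ℝ)) = θ := (Finset.mem_filter.mp hI₀).2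
  set r := c I₀ with hr
  have hNr : ((N : ℕ) : ℝ) ≠ 0 := Nat.cast_ne_zero.mpr hN0
  have hmem : ∀ I : Finset (Fin k),
      (Int.fract (∑ s ∈ I, (m s : ℝ) / (n s : ℝ)) = θ) ↔ ((N : ℕ) : ℤ) ∣ (c I - r) := by
    intro I
    rw [← hI₀f, hfrac I, hfrac I₀, Int.fract_eq_fract]
    constructor
    · rintro ⟨z, hz⟩
      refine ⟨z, ?_⟩
      have h2 : ((c I : ℤ) : ℝ) - ((r : ℤ) : ℝ) = (z : ℝ) * (N : ℝ) := by
        field_simp at hz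
        linarith
      have h3 : c I - r = z * ((N : ℕ) : ℤ) := by exact_mod_cast h2
      rw [h3, mul_comm]
    · rintro ⟨z, hz⟩
      refine ⟨z, ?_⟩
      have h2 : ((c I : ℤ) : ℝ) - ((r : ℤ) : ℝ) = (z : ℝ) * (N : ℝ) := by
        have h4 := congrArg (fun x : ℤ => (x : ℝ)) hz
        push_cast at h4
        linarith
      rw [div_sub_div_same, h2, mul_div_assoc, div_self hNr, mul_one]
  rw [Finset.sum_filter]
  refine (mul_eq_zero.mp ?_).resolve_left hNF
  rw [Finset.mul_sum]
  have hterm : ∀ I ∈ (Finset.univ : Finset (Fin k)).powerset,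
      (N : F) * (if Int.fract (∑ s ∈ I, (m s : ℝ) / (n s : ℝ)) = θ then
          (-1 : F) ^ I.card * MvPolynomial.eval (fun s => if s ∈ I then (1 : F) else 0) f *
            ζ ^ (∑ s ∈ I, a s * m s * ((N / n s : ℕ) : ℤ)) else 0)
      = ∑ j ∈ Finset.range N,
          ((-1 : F) ^ I.card * MvPolynomial.eval (fun s => if s ∈ I then (1 : F) else 0) f *
            ζ ^ (∑ s ∈ I, a s * m s * ((N / n s : ℕ) : ℤ))) * ζ ^ ((j : ℤ) * (c I - r)) := by
    intro I _
    rw [← Finset.mul_sum, hgeom (c I - r)]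
    by_cases h : ((N : ℕ) : ℤ) ∣ (c I - r)
    · rw [if_pos ((hmem I).mpr h), if_pos h]; ring
    · rw [if_neg (fun hf => h ((hmem I).mp hf)), if_neg h]; ring
  rw [Finset.sum_congr rfl hterm, Finset.sum_comm]
  refine Finset.sum_eq_zero fun j _ => ?_
  set w : Fin k → F := fun s => ζ ^ ((a s + (j : ℤ)) * (m s * ((N / n s : ℕ) : ℤ))) with hwdef
  have hsplit : ∀ I ∈ (Finset.univ : Finset (Fin k)).powerset,
      ((-1 : F) ^ I.card * MvPolynomial.eval (fun s => if s ∈ I then (1 : F) else 0) f *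
            ζ ^ (∑ s ∈ I, a s * m s * ((N / n s : ℕ) : ℤ))) * ζ ^ ((j : ℤ) * (c I - r))
      = ((-1 : F) ^ I.card * MvPolynomial.eval (fun s => if s ∈ I then (1 : F) else 0) f *
          ∏ s ∈ I, w s) * ζ ^ (-((j : ℤ) * r)) := by
    intro I _
    have e1 : (∑ s ∈ I, a s * m s * ((N / n s : ℕ) : ℤ)) + (j : ℤ) * c I
        = ∑ s ∈ I, (a s + (j : ℤ)) * (m s * ((N / n s : ℕ) : ℤ)) := by
      simp only [hc]
      rw [Finset.mul_sum, ← Finset.sum_add_distrib]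
      exact Finset.sum_congr rfl fun s _ => by ring
    have e3 : ζ ^ ((j : ℤ) * (c I - r)) = ζ ^ ((j : ℤ) * c I) * ζ ^ (-((j : ℤ) * r)) := by
      rw [← zpow_add₀ hζ0]
      congr 1
      ring
    have e4 : ζ ^ (∑ s ∈ I, a s * m s * ((N / n s : ℕ) : ℤ)) * ζ ^ ((j : ℤ) * c I)
        = ∏ s ∈ I, w s := by
      rw [← zpow_add₀ hζ0, e1, zpow_finset_sum' hζ0]
    rw [e3, ← e4]; ring
  rw [Finset.sum_congr rfl hsplit, ← Finset.sum_mul]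
  have hw1 : ∀ s ∈ Finset.univ.filter (fun s : Fin k => (n s : ℤ) ∣ (-(j : ℤ)) - a s),
      w s = 1 := by
    intro s hs
    obtain ⟨q, hq⟩ := (Finset.mem_filter.mp hs).2
    have hq2 : a s + (j : ℤ) = (n s : ℤ) * (-q) := by linarith [hq]
    show ζ ^ ((a s + (j : ℤ)) * (m s * ((N / n s : ℕ) : ℤ))) = 1
    rw [hq2]
    refine (hZ1 _).mpr ⟨(-q) * m s, ?_⟩
    have hNI : (n s : ℤ) * ((N / n s : ℕ) : ℤ) = ((N : ℕ) : ℤ) := by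
      exact_mod_cast congrArg (Nat.cast : ℕ → ℤ) (Nat.mul_div_cancel' (hdvd s))
    calc ((n s : ℤ) * (-q)) * (m s * ((N / n s : ℕ) : ℤ))
        = ((n s : ℤ) * ((N / n s : ℕ) : ℤ)) * ((-q) * m s) := by ring
      _ = ((N : ℕ) : ℤ) * ((-q) * m s) := by rw [hNI]
  rw [sun_aux f w (Finset.univ.filter (fun s : Fin k => (n s : ℤ) ∣ (-(j : ℤ)) - a s))
      (hdeg (-(j : ℤ))) (hcoeff (-(j : ℤ))) hw1, zero_mul]
end

section
/- Let A = {a_s(n_s)}_{s=1}^k be a finite system of residue classes, set N_A = lcm(n_1,...,n_k), and for z ∈ ℤ set I_z = {1 ≤ s ≤ k : z ≡ a_s (mod n_s)}. Let m_1,...,m_k be integers with gcd(m_s,n_s) = 1 for each s, let F be a field containing an element ζ of multiplicative order N_A, and let f(x_1,...,x_k) be a polynomial over F with deg f ≤ m(A). For θ ∈ [0,1) define ψ(θ) = ∑ (−1)^{|I|} f([[1∈I]],...,[[k∈I]]) ζ^{N_A ∑_{s∈I} a_s m_s/n_s}, the sum over all I ⊆ {1,...,k} with fractional part {∑_{s∈I}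 m_s/n_s} = θ. If ψ(θ) = 0 for all θ ∈ [0,1), then for every z ∈ ℤ the coefficient of the monomial ∏_{s∈I_z} x_s in f is zero. -/
open scoped Classical

section Aux

lemma aux_prod_zpow {F : Type*} [Field F] {x : F} (hx : x ≠ 0) {σ : Type*}
    (s : Finset σ) (g : σ → ℤ) :
    ∏ i ∈ s, x ^ g i = x ^ (∑ i ∈ s, g i) := by
  induction s using Finset.cons_induction with
  | empty => simp
  | cons a s ha ih => rw [Finset.prod_cons, Finset.sum_cons, ih, zpow_add₀ hx]

lemma aux_eval_indicator {σ : Type*} [DecidableEq σ] {F : Type*} [CommSemiring F]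
    (f : MvPolynomial σ F) (I : Finset σ) :
    MvPolynomial.eval (fun s => if s ∈ I then (1:F) else 0) f
      = ∑ d ∈ f.support, MvPolynomial.coeff d f * (if d.support ⊆ I then 1 else 0) := by
  rw [MvPolynomial.eval_eq]
  refine Finset.sum_congr rfl fun d hd => ?_
  congr 1
  by_cases h : d.support ⊆ I
  · rw [if_pos h]
    apply Finset.prod_eq_one
    intro i hi
    rw [if_pos (h hi), one_pow]
  · rw [if_neg h]
    obtain ⟨i, hi, hiI⟩ := Finset.not_subset.mp h
    refine Finset.prod_eq_zero hi ?_
    rw [if_neg hiI, zero_pow (Finsupp.mem_support_iff.mp hi)]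

lemma aux_inner {σ : Type*} [Fintype σ] [DecidableEq σ] {R : Type*} [CommRing R] (w : σ → R) (T : Finset σ) :
    ∑ I ∈ Finset.univ.powerset.filter (fun I => T ⊆ I), (-1:R)^I.card * ∏ s ∈ I, w s
      = (-1)^T.card * (∏ s ∈ T, w s) * ∏ s ∈ Tᶜ, (1 - w s) := by
  have hrhs : ∏ s ∈ Tᶜ, (1 - w s) = ∑ J ∈ Tᶜ.powerset, (-1:R)^J.card * ∏ s ∈ J, w s := by
    calc ∏ s ∈ Tᶜ, (1 - w s) = ∏ s ∈ Tᶜ, (-w s + 1) := by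
          refine Finset.prod_congr rfl fun s _ => by ring
      _ = ∑ J ∈ Tᶜ.powerset, (∏ s ∈ J, -w s) * ∏ s ∈ Tᶜ \ J, 1 :=
          Finset.prod_add _ _ _
      _ = ∑ J ∈ Tᶜ.powerset, (-1:R)^J.card * ∏ s ∈ J, w s := by
          refine Finset.sum_congr rfl fun J _ => ?_
          simp only [Finset.prod_const_one, mul_one]
          rw [show (fun s => -w s) = (fun s => (-1:R) * w s) from funext fun s => by ring,
            Finset.prod_mul_distrib, Finset.prod_const]
  rw [hrhs, Finset.mul_sum]
  refine Finset.sum_nbij' (fun I => I \ T) (fun J => T ∪ J) ?_ ?_ ?_ ?_ ?_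
  · intro I hI
    simp only [Finset.mem_filter, Finset.mem_powerset] at hI
    simp only [Finset.mem_powerset]
    intro x hx
    simp only [Finset.mem_sdiff] at hx
    simpa using hx.2
  · intro J hJ
    simp only [Finset.mem_filter, Finset.mem_powerset]
    exact ⟨Finset.subset_univ _, Finset.subset_union_left⟩
  · intro I hI
    simp only [Finset.mem_filter, Finset.mem_powerset] at hI
    exact Finset.union_sdiff_of_subset hI.2
  · intro J hJ
    simp only [Finset.mem_powerset] at hJ
    refine Finset.union_sdiff_cancel_left ?_
    refine Finset.disjoint_left.mpr fun x hxT hxJ => ?_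
    have := hJ hxJ
    simp only [Finset.mem_compl] at this
    exact this hxT
  · intro I hI
    simp only [Finset.mem_filter, Finset.mem_powerset] at hI
    have hdisj : Disjoint T (I \ T) := Finset.disjoint_sdiff
    have hcard : I.card = T.card + (I \ T).card := by
      rw [← Finset.card_union_of_disjoint hdisj, Finset.union_sdiff_of_subset hI.2]
    have hprod : ∏ s ∈ I, w s = (∏ s ∈ T, w s) * ∏ s ∈ I \ T, w s := by
      rw [← Finset.prod_union hdisj, Finset.union_sdiff_of_subset hI.2]
    rw [hcard, hprod, pow_add]
    ring

end Aux

/-- **Lemma 4.1, converse direction** (Sun): Let `A = {a_s(n_s)}_{s=1}^k`,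
`N_A = lcm(n₁,…,n_k)`, `I_z = {s : z ≡ a_s (mod n_s)}`, let `m₁,…,m_k` be integers coprime
to `n₁,…,n_k` respectively, let `F` be a field containing an element `ζ` of multiplicative
order `N_A`, and let `f` be a polynomial over `F` with `deg f ≤ m(A)`.  For `θ ∈ [0,1)` let
`ψ(θ) = ∑_{I ⊆ [1,k], {∑_{s∈I} m_s/n_s} = θ} (-1)^{|I|} f([[1∈I]],…,[[k∈I]]) ζ^{N_A ∑_{s∈I} a_s m_s/n_s}`.
If `ψ(θ) = 0` for all `θ ∈ [0,1)`, then the coefficient of `∏_{s∈I_z} x_s` in `f` vanishes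
for every `z ∈ ℤ`. -/
theorem sun_lemma4_1_converse (k : ℕ) (a : Fin k → ℤ) (n : Fin k → ℕ) (hn : ∀ s, 0 < n s)
    (N : ℕ) (hN : N = Finset.univ.lcm n)
    (m : Fin k → ℤ) (hm : ∀ s, IsCoprime (m s) (n s : ℤ))
    (F : Type*) [Field F] (ζ : F) (hζ : orderOf ζ = N)
    (f : MvPolynomial (Fin k) F)
    -- `deg f ≤ m(A)`, the covering multiplicity of `A`:
    (hdeg : ∀ z : ℤ, f.totalDegree ≤
      (Finset.univ.filter (fun s : Fin k => (n s : ℤ) ∣ z - a s)).card)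
    -- `ψ(θ) = 0` for all `θ ∈ [0,1)`:
    (hpsi : ∀ θ : ℝ, 0 ≤ θ → θ < 1 →
      (∑ I ∈ (Finset.univ : Finset (Fin k)).powerset.filter
          (fun I => Int.fract (∑ s ∈ I, (m s : ℝ) / (n s : ℝ)) = θ),
        (-1 : F) ^ I.card *
          MvPolynomial.eval (fun s => if s ∈ I then (1 : F) else 0) f *
          ζ ^ (∑ s ∈ I, a s * m s * ((N / n s : ℕ) : ℤ))) = 0) :
    ∀ z : ℤ, MvPolynomial.coeff
      (∑ s ∈ Finset.univ.filter (fun s : Fin k => (n s : ℤ) ∣ z - a s),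
        Finsupp.single s 1) f = 0 := by
  intro z
  -- basic facts
  have hNpos : 0 < N := by
    rcases Nat.eq_zero_or_pos N with h | h
    · exfalso
      rw [h] at hN
      have h' := hN.symm
      rw [Finset.lcm_eq_zero_iff] at h'
      obtain ⟨s, _, hs⟩ := h'
      exact (hn s).ne' hs
    · exact h
  have hζN : ζ ^ N = 1 := hζ ▸ pow_orderOf_eq_one ζ
  have hζ0 : ζ ≠ 0 := by
    intro h
    rw [h, zero_pow hNpos.ne'] at hζN
    exact zero_ne_one hζN
  have hdvdN : ∀ s, n s ∣ N := fun s => hN ▸ Finset.dvd_lcm (Finset.mem_univ s)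
  have hmul : ∀ s, ((N / n s : ℕ) : ℤ) * (n s : ℤ) = (N : ℤ) := fun s => by
    rw [← Nat.cast_mul, Nat.div_mul_cancel (hdvdN s)]
  have hcpos : ∀ s, ((N / n s : ℕ) : ℤ) ≠ 0 := fun s => by
    have h : 0 < N / n s := Nat.div_pos (Nat.le_of_dvd hNpos (hdvdN s)) (hn s)
    exact_mod_cast h.ne'
  set T : Finset (Fin k) :=
    Finset.univ.filter (fun s : Fin k => (n s : ℤ) ∣ z - a s) with hTdef
  set M : Fin k →₀ ℕ := ∑ s ∈ T, Finsupp.single s 1 with hMdef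
  -- the unit
  set u : Fˣ := Units.mk0 ζ hζ0 with hudef
  have huval : (u : F) = ζ := rfl
  have huord : orderOf u = N := by rw [← orderOf_units, huval, hζ]
  -- the weights
  set w : Fin k → F := fun s => ζ ^ ((a s - z) * (m s * ((N / n s : ℕ) : ℤ))) with hwdef
  have hwiff : ∀ s : Fin k, w s = 1 ↔ s ∈ T := by
    intro s
    have hwu : w s = ((u ^ ((a s - z) * (m s * ((N / n s : ℕ) : ℤ))) : Fˣ) : F) := by
      rw [Units.val_zpow_eq_zpow_val, huval]
    rw [hwu, Units.val_eq_one, ← orderOf_dvd_iff_zpow_eq_one, huord]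
    have h1 : ((N : ℤ)) ∣ (a s - z) * (m s * ((N / n s : ℕ) : ℤ)) ↔
        (n s : ℤ) ∣ (a s - z) * m s := by
      constructor
      · intro h
        rw [← hmul s] at h
        have h2 : ((N / n s : ℕ) : ℤ) * (n s : ℤ) ∣
            ((N / n s : ℕ) : ℤ) * ((a s - z) * m s) := by
          have heq : (a s - z) * (m s * ((N / n s : ℕ) : ℤ))
              = ((N / n s : ℕ) : ℤ) * ((a s - z) * m s) := by ring
          rwa [heq] at h
        exact (mul_dvd_mul_iff_left (hcpos s)).mp h2
      · intro h
        rw [← hmul s]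
        have h2 : ((N / n s : ℕ) : ℤ) * (n s : ℤ) ∣
            ((N / n s : ℕ) : ℤ) * ((a s - z) * m s) := mul_dvd_mul_left _ h
        have heq : ((N / n s : ℕ) : ℤ) * ((a s - z) * m s)
            = (a s - z) * (m s * ((N / n s : ℕ) : ℤ)) := by ring
        rwa [heq] at h2
    rw [h1]
    constructor
    · intro h
      have h2 : (n s : ℤ) ∣ a s - z := (hm s).symm.dvd_of_dvd_mul_right h
      have heq : z - a s = -(a s - z) := by ring
      simp only [hTdef, Finset.mem_filter, Finset.mem_univ, true_and]
      rw [heq]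
      exact h2.neg_right
    · intro h
      simp only [hTdef, Finset.mem_filter, Finset.mem_univ, true_and] at h
      have h2 : (n s : ℤ) ∣ a s - z := by
        have heq : a s - z = -(z - a s) := by ring
        rw [heq]
        exact h.neg_right
      exact Dvd.dvd.mul_right h2 _
  -- the fractional parts
  have hfrac : ∀ I : Finset (Fin k),
      (∑ s ∈ I, (m s : ℝ) / (n s : ℝ))
        = ((∑ s ∈ I, m s * ((N / n s : ℕ) : ℤ) : ℤ) : ℝ) / (N : ℝ) := by
    intro I
    rw [Int.cast_sum, Finset.sum_div]
    refine Finset.sum_congr rfl fun s _ => ?_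
    have hns : (n s : ℝ) ≠ 0 := by exact_mod_cast (hn s).ne'
    have hNr : (N : ℝ) ≠ 0 := by exact_mod_cast hNpos.ne'
    have hNr2 : ((N / n s : ℕ) : ℝ) * (n s : ℝ) = (N : ℝ) := by
      exact_mod_cast congrArg (Int.cast : ℤ → ℝ) (hmul s)
    rw [Int.cast_mul, Int.cast_natCast, div_eq_div_iff hns hNr, mul_assoc, hNr2]
  -- zeta power depends only on residue mod N
  have hzpow_mod : ∀ x y : ℤ, x % (N : ℤ) = y % (N : ℤ) → ζ ^ x = ζ ^ y := by
    intro x y hxy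
    have h : (u : Fˣ) ^ x = u ^ y := by
      rw [zpow_eq_zpow_iff_modEq, huord]
      exact hxy
    calc ζ ^ x = ((u ^ x : Fˣ) : F) := by rw [Units.val_zpow_eq_zpow_val, huval]
      _ = ((u ^ y : Fˣ) : F) := by rw [h]
      _ = ζ ^ y := by rw [Units.val_zpow_eq_zpow_val, huval]
  -- products of weights
  have hprodw : ∀ I : Finset (Fin k),
      ∏ s ∈ I, w s = ζ ^ (∑ s ∈ I, a s * m s * ((N / n s : ℕ) : ℤ)) *
        ζ ^ (-(z * (∑ s ∈ I, m s * ((N / n s : ℕ) : ℤ)))) := by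
    intro I
    rw [hwdef]
    rw [aux_prod_zpow hζ0, ← zpow_add₀ hζ0]
    congr 1
    rw [← sub_eq_add_neg, Finset.mul_sum, ← Finset.sum_sub_distrib]
    refine Finset.sum_congr rfl fun s _ => by ring
  -- Step 1: the star identity
  have hstar : ∑ I ∈ (Finset.univ : Finset (Fin k)).powerset,
      (-1:F)^I.card * MvPolynomial.eval (fun s => if s ∈ I then (1:F) else 0) f *
        ∏ s ∈ I, w s = 0 := by
    rw [← Finset.sum_fiberwise_of_maps_to
      (t := (Finset.univ : Finset (Fin k)).powerset.image
        (fun I => Int.fract (∑ s ∈ I, (m s : ℝ) / (n s : ℝ))))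
      (g := fun I => Int.fract (∑ s ∈ I, (m s : ℝ) / (n s : ℝ)))
      (fun I hI => Finset.mem_image_of_mem _ hI)]
    refine Finset.sum_eq_zero fun θ hθ => ?_
    obtain ⟨I₀, hI₀, hgI₀⟩ := Finset.mem_image.mp hθ
    have hθ0 : 0 ≤ θ := hgI₀ ▸ Int.fract_nonneg _
    have hθ1 : θ < 1 := hgI₀ ▸ Int.fract_lt_one _
    have hconst : ∀ I ∈ (Finset.univ : Finset (Fin k)).powerset.filter
        (fun I => Int.fract (∑ s ∈ I, (m s : ℝ) / (n s : ℝ)) = θ),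
        ζ ^ (-(z * (∑ s ∈ I, m s * ((N / n s : ℕ) : ℤ))))
          = ζ ^ (-(z * ((∑ s ∈ I₀, m s * ((N / n s : ℕ) : ℤ)) % (N : ℤ)))) := by
      intro I hI
      have hgI : Int.fract (∑ s ∈ I, (m s : ℝ) / (n s : ℝ)) = θ :=
        (Finset.mem_filter.mp hI).2
      have hmod : (∑ s ∈ I, m s * ((N / n s : ℕ) : ℤ)) % (N : ℤ)
          = (∑ s ∈ I₀, m s * ((N / n s : ℕ) : ℤ)) % (N : ℤ) := by
        have h1 : Int.fract (((∑ s ∈ I, m s * ((N / n s : ℕ) : ℤ) : ℤ) : ℝ) / (N : ℝ))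
            = Int.fract (((∑ s ∈ I₀, m s * ((N / n s : ℕ) : ℤ) : ℤ) : ℝ) / (N : ℝ)) := by
          rw [← hfrac, ← hfrac, hgI, hgI₀]
        rw [Int.fract_div_intCast_eq_div_intCast_mod,
          Int.fract_div_intCast_eq_div_intCast_mod] at h1
        have hNr : (N : ℝ) ≠ 0 := by exact_mod_cast hNpos.ne'
        rw [div_eq_div_iff hNr hNr] at h1
        have h1' := mul_right_cancel₀ hNr h1
        exact_mod_cast h1'
      apply hzpow_mod
      have hm1 : (∑ s ∈ I, m s * ((N / n s : ℕ) : ℤ)) ≡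
          (∑ s ∈ I₀, m s * ((N / n s : ℕ) : ℤ)) % (N : ℤ) [ZMOD (N : ℤ)] := by
        show _ % _ = _ % _
        rw [Int.emod_emod_of_dvd _ dvd_rfl]
        exact hmod
      exact ((hm1.mul_left z).neg : _)
    calc ∑ I ∈ (Finset.univ : Finset (Fin k)).powerset.filter
          (fun I => Int.fract (∑ s ∈ I, (m s : ℝ) / (n s : ℝ)) = θ),
          (-1:F)^I.card * MvPolynomial.eval (fun s => if s ∈ I then (1:F) else 0) f *
            ∏ s ∈ I, w s
        = ∑ I ∈ (Finset.univ : Finset (Fin k)).powerset.filter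
          (fun I => Int.fract (∑ s ∈ I, (m s : ℝ) / (n s : ℝ)) = θ),
          ((-1:F)^I.card * MvPolynomial.eval (fun s => if s ∈ I then (1:F) else 0) f *
            ζ ^ (∑ s ∈ I, a s * m s * ((N / n s : ℕ) : ℤ))) *
            ζ ^ (-(z * ((∑ s ∈ I₀, m s * ((N / n s : ℕ) : ℤ)) % (N : ℤ)))) := by
          refine Finset.sum_congr rfl fun I hI => ?_
          rw [hprodw I, hconst I hI]
          ring
      _ = (∑ I ∈ (Finset.univ : Finset (Fin k)).powerset.filter
          (fun I => Int.fract (∑ s ∈ I, (m s : ℝ) / (n s : ℝ)) = θ),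
          (-1:F)^I.card * MvPolynomial.eval (fun s => if s ∈ I then (1:F) else 0) f *
            ζ ^ (∑ s ∈ I, a s * m s * ((N / n s : ℕ) : ℤ))) *
            ζ ^ (-(z * ((∑ s ∈ I₀, m s * ((N / n s : ℕ) : ℤ)) % (N : ℤ)))) :=
          (Finset.sum_mul _ _ _).symm
      _ = 0 := by rw [hpsi θ hθ0 hθ1, zero_mul]
  -- Step 2: expand the evaluation and swap sums
  have hkey : ∑ d ∈ f.support, MvPolynomial.coeff d f *
      (∑ I ∈ Finset.univ.powerset.filter (fun I => d.support ⊆ I),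
        (-1:F)^I.card * ∏ s ∈ I, w s) = 0 := by
    rw [← hstar]
    calc ∑ d ∈ f.support, MvPolynomial.coeff d f *
        (∑ I ∈ Finset.univ.powerset.filter (fun I => d.support ⊆ I),
          (-1:F)^I.card * ∏ s ∈ I, w s)
        = ∑ d ∈ f.support, ∑ I ∈ (Finset.univ : Finset (Fin k)).powerset,
          MvPolynomial.coeff d f *
            (if d.support ⊆ I then (-1:F)^I.card * ∏ s ∈ I, w s else 0) := by
          refine Finset.sum_congr rfl fun d _ => ?_
          rw [Finset.sum_filter, Finset.mul_sum]
      _ = ∑ I ∈ (Finset.univ : Finset (Fin k)).powerset, ∑ d ∈ f.support,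
          MvPolynomial.coeff d f *
            (if d.support ⊆ I then (-1:F)^I.card * ∏ s ∈ I, w s else 0) :=
          Finset.sum_comm
      _ = ∑ I ∈ (Finset.univ : Finset (Fin k)).powerset,
          (-1:F)^I.card * MvPolynomial.eval (fun s => if s ∈ I then (1:F) else 0) f *
            ∏ s ∈ I, w s := by
          refine Finset.sum_congr rfl fun I _ => ?_
          rw [aux_eval_indicator, Finset.mul_sum, Finset.sum_mul]
          refine Finset.sum_congr rfl fun d _ => ?_
          split_ifs with h
          · ring
          · ring
  have hkey2 : ∑ d ∈ f.support, MvPolynomial.coeff d f *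
      ((-1:F)^d.support.card * (∏ s ∈ d.support, w s) *
        ∏ s ∈ d.supportᶜ, (1 - w s)) = 0 := by
    rw [← hkey]
    refine Finset.sum_congr rfl fun d _ => ?_
    rw [aux_inner]
  -- facts about the monomial M
  have hMapp : ∀ i, M i = if i ∈ T then 1 else 0 := by
    intro i
    rw [hMdef, Finsupp.finset_sum_apply]
    simp only [Finsupp.single_apply]
    rw [Finset.sum_ite_eq' T i (fun _ => 1)]
  have hMsupp : M.support = T := by
    ext i
    rw [Finsupp.mem_support_iff, hMapp i]
    split_ifs with h <;> simp [h]
  by_cases hM : M ∈ f.support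
  · -- the key case
    have hsingle : ∀ d ∈ f.support, d ≠ M → MvPolynomial.coeff d f *
        ((-1:F)^d.support.card * (∏ s ∈ d.support, w s) *
          ∏ s ∈ d.supportᶜ, (1 - w s)) = 0 := by
      intro d hd hne
      by_cases hTd : T ⊆ d.support
      · exfalso
        apply hne
        have h1 : d.support.card ≤ ∑ s ∈ d.support, d s := by
          calc d.support.card = ∑ s ∈ d.support, 1 := by
                rw [Finset.card_eq_sum_ones]
            _ ≤ ∑ s ∈ d.support, d s := Finset.sum_le_sum fun s hs =>
                Nat.one_le_iff_ne_zero.mpr (Finsupp.mem_support_iff.mp hs)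
        have h2 : (d.sum fun _ e => e) ≤ f.totalDegree := MvPolynomial.le_totalDegree hd
        have h2' : ∑ s ∈ d.support, d s ≤ f.totalDegree := h2
        have h3 : f.totalDegree ≤ T.card := by rw [hTdef]; exact hdeg z
        have hcards : d.support.card ≤ T.card := le_trans h1 (le_trans h2' h3)
        have hsupp : T = d.support := Finset.eq_of_subset_of_card_le hTd hcards
        have hsum_eq : ∑ s ∈ d.support, d s = d.support.card := by
          apply le_antisymm
          · calc ∑ s ∈ d.support, d s ≤ f.totalDegree := h2'
              _ ≤ T.card := h3
              _ = d.support.card := by rw [hsupp]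
          · exact h1
        have hone : ∀ s ∈ d.support, d s = 1 := by
          intro s hs
          by_contra hne1
          have h5 : 1 < d s := lt_of_le_of_ne
            (Nat.one_le_iff_ne_zero.mpr (Finsupp.mem_support_iff.mp hs)) (Ne.symm hne1)
          have h6 : ∑ _s ∈ d.support, (1:ℕ) < ∑ s ∈ d.support, d s :=
            Finset.sum_lt_sum (fun i hi =>
              Nat.one_le_iff_ne_zero.mpr (Finsupp.mem_support_iff.mp hi)) ⟨s, hs, h5⟩
          rw [hsum_eq, ← Finset.card_eq_sum_ones] at h6
          exact lt_irrefl _ h6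
        apply Finsupp.ext
        intro i
        rw [hMapp i]
        by_cases hi : i ∈ T
        · rw [if_pos hi]
          exact hone i (hsupp ▸ hi)
        · rw [if_neg hi]
          have hi' : i ∉ d.support := by rw [← hsupp]; exact hi
          exact Finsupp.notMem_support_iff.mp hi'
      · obtain ⟨s₀, hs₀T, hs₀d⟩ := Finset.not_subset.mp hTd
        have hz : ∏ s ∈ d.supportᶜ, (1 - w s) = 0 := by
          refine Finset.prod_eq_zero (Finset.mem_compl.mpr hs₀d) ?_
          rw [(hwiff s₀).mpr hs₀T, sub_self]
        rw [hz]
        ring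
    have hfin := Finset.sum_eq_single_of_mem M hM hsingle
    rw [hfin] at hkey2
    have hnz : ((-1:F)^M.support.card * (∏ s ∈ M.support, w s) *
        ∏ s ∈ M.supportᶜ, (1 - w s)) ≠ 0 := by
      apply mul_ne_zero
      apply mul_ne_zero
      · exact pow_ne_zero _ (neg_ne_zero.mpr one_ne_zero)
      · rw [hMsupp]
        rw [Finset.prod_congr rfl (fun s hs => (hwiff s).mpr hs)]
        simp
      · rw [Finset.prod_ne_zero_iff]
        intro s hs
        rw [hMsupp] at hs
        have hws : w s ≠ 1 := fun h => (Finset.mem_compl.mp hs) ((hwiff s).mp h)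
        exact sub_ne_zero_of_ne (Ne.symm hws)
    exact (mul_eq_zero.mp hkey2).resolve_right hnz
  · exact MvPolynomial.notMem_support_iff.mp hM
end
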